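/- arXiv:2401.01088 — 5 statements merged into one kernel-verified Lean document; each statement's English description precedes it below -/
import Mathlib

section
/- Let φ : ℝ^d → ℝ be a convex, Lipschitz continuous function with Lipschitz constant Lip(φ), and for α, η > 0 let Σ_{η,α} = {x ∈ ℝ^d : diam(∂φ(B(x,η))) ≥ α}. Then for every R > 0, there exists a finite set Z ⊆ ℝ^d of cardinality at most c_{d,R,η} · Lip(φ)/(α η^{d−1}), with c_{d,R,η} = 48 d² (R+4η)^{d−1}, such that Σ_{η,α} ∩ B(0,R) is covered by the union of the closed balls of radius 8η centered at the points of Z. -/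
open Metric Set

/-- The subdifferential of `φ` at `x`. -/
def subdiff {d : ℕ} (φ : EuclideanSpace ℝ (Fin d) → ℝ) (x : EuclideanSpace ℝ (Fin d)) :
    Set (EuclideanSpace ℝ (Fin d)) :=
  {g | ∀ y, φ x + (inner ℝ g (y - x) : ℝ) ≤ φ y}

/-- The image of a set `A` by the subdifferential of `φ`: `∂φ(A) = ⋃_{x ∈ A} ∂φ(x)`. -/
def subdiffSet {d : ℕ} (φ : EuclideanSpace ℝ (Fin d) → ℝ) (A : Set (EuclideanSpace ℝ (Fin d))) :
    Set (EuclideanSpace ℝ (Fin d)) :=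
  ⋃ x ∈ A, subdiff φ x

open MeasureTheory

section Aux

variable {d : ℕ} {L : NNReal} {φ : EuclideanSpace ℝ (Fin d) → ℝ}

local notation "E" => EuclideanSpace ℝ (Fin d)

/-- monotonicity of the subdifferential -/
lemma subdiff_mono {x x' g g' : E} (hg : g ∈ subdiff φ x) (hg' : g' ∈ subdiff φ x') :
    0 ≤ (inner ℝ (g - g') (x - x') : ℝ) := by
  have h1 := hg x'
  have h2 := hg' x
  have e1 : (inner ℝ g (x' - x) : ℝ) = - inner ℝ g (x - x') := by
    rw [← inner_neg_right, neg_sub]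
  have e2 : (inner ℝ (g - g') (x - x') : ℝ) = inner ℝ g (x - x') - inner ℝ g' (x - x') := by
    rw [inner_sub_left]
  rw [e1] at h1
  linarith

lemma subdiff_norm_le (hlip : LipschitzWith L φ) {x g : E} (hg : g ∈ subdiff φ x) :
    ‖g‖ ≤ (L : ℝ) := by
  have h := hg (x + g)
  have e1 : (inner ℝ g (x + g - x) : ℝ) = ‖g‖ ^ 2 := by
    rw [add_sub_cancel_left, real_inner_self_eq_norm_sq]
  have h2 : φ (x + g) - φ x ≤ (L : ℝ) * ‖g‖ := by
    have := hlip.dist_le_mul (x + g) x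
    rw [Real.dist_eq] at this
    have hd : dist (x + g) x = ‖g‖ := by
      rw [dist_eq_norm]; simp
    calc φ (x + g) - φ x ≤ |φ (x + g) - φ x| := le_abs_self _
      _ ≤ (L : ℝ) * dist (x + g) x := this
      _ = (L : ℝ) * ‖g‖ := by rw [hd]
  rw [e1] at h
  have h3 : ‖g‖ ^ 2 ≤ (L : ℝ) * ‖g‖ := by linarith
  by_cases hg0 : ‖g‖ = 0
  · rw [hg0]; exact L.coe_nonneg
  · have hpos : 0 < ‖g‖ := lt_of_le_of_ne (norm_nonneg g) (Ne.symm hg0)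
    nlinarith

lemma exists_prox (hconv : ConvexOn ℝ Set.univ φ) (hlip : LipschitzWith L φ)
    {l : ℝ} (hl : 0 < l) (y : E) :
    ∃ x g, g ∈ subdiff φ x ∧ x + l • g = y := by
  classical
  set ψ : E → ℝ := fun u => 2 * l * φ u + ‖u - y‖ ^ 2 with hψ
  have hψc : Continuous ψ := by
    apply ((continuous_const.mul hlip.continuous)).add
    exact ((continuous_id.sub continuous_const).norm.pow 2)
  have hrad : (0:ℝ) < 2 * l * (L : ℝ) + 1 := by positivity
  obtain ⟨x, hxmem, hxmin⟩ := (isCompact_closedBall y (2 * l * (L:ℝ) + 1)).exists_isMinOn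
    ⟨y, mem_closedBall_self hrad.le⟩ hψc.continuousOn
  rw [isMinOn_iff] at hxmin
  have hglobal : ∀ u, ψ x ≤ ψ u := by
    intro u
    by_cases hu : u ∈ closedBall y (2 * l * (L:ℝ) + 1)
    · exact hxmin u hu
    · have hs : 2 * l * (L:ℝ) + 1 < dist u y := by
        by_contra hc
        exact hu (mem_closedBall.2 (not_lt.1 hc))
      have hlb : φ y - (L:ℝ) * dist u y ≤ φ u := by
        have h := hlip.dist_le_mul u y
        rw [Real.dist_eq] at h
        have := abs_le.1 h
        linarith [this.1]
      have hψy : ψ x ≤ ψ y := hxmin y (mem_closedBall_self hrad.le)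
      have hψyval : ψ y = 2 * l * φ y := by simp [hψ]
      have hnorm : ‖u - y‖ = dist u y := by rw [dist_eq_norm]
      have : ψ y ≤ ψ u := by
        rw [hψyval, hψ]
        simp only []
        rw [hnorm]
        nlinarith [dist_nonneg (x := u) (y := y), L.coe_nonneg, hl]
      linarith
  refine ⟨x, l⁻¹ • (y - x), ?_, ?_⟩
  · intro u
    have hA : (inner ℝ (l⁻¹ • (y - x)) (u - x) : ℝ) = l⁻¹ * inner ℝ (y - x) (u - x) :=
      real_inner_smul_left _ _ _
    set A : ℝ := inner ℝ (y - x) (u - x) with hAdef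
    set B : ℝ := ‖u - x‖ ^ 2 with hBdef
    have hB : 0 ≤ B := by positivity
    -- key polynomial inequality for all t ∈ (0,1]
    have key : ∀ t : ℝ, 0 < t → t ≤ 1 → 0 ≤ 2 * l * t * (φ u - φ x) - 2 * t * A + t ^ 2 * B := by
      intro t ht0 ht1
      have hmem1 : x + t • (u - x) = (1 - t) • x + t • u := by module
      have hcvx : φ (x + t • (u - x)) ≤ φ x + t * (φ u - φ x) := by
        rw [hmem1]
        have := hconv.2 (Set.mem_univ x) (Set.mem_univ u) (by linarith : (0:ℝ) ≤ 1 - t)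
          ht0.le (by ring : (1 - t) + t = 1)
        calc φ ((1-t) • x + t • u) ≤ (1-t) * φ x + t * φ u := by simpa using this
          _ = φ x + t * (φ u - φ x) := by ring
      have hexp : ‖x + t • (u - x) - y‖ ^ 2
          = ‖x - y‖ ^ 2 - 2 * t * A + t ^ 2 * B := by
        have hre : x + t • (u - x) - y = (x - y) + t • (u - x) := by module
        rw [hre, norm_add_sq_real, real_inner_smul_right, norm_smul, Real.norm_eq_abs,
          mul_pow, sq_abs]
        have hswap : (inner ℝ (x - y) (u - x) : ℝ) = - A := by
          rw [hAdef, ← inner_neg_left, neg_sub]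
        rw [hswap, hBdef]
        ring
      have hglob := hglobal (x + t • (u - x))
      rw [hψ] at hglob
      simp only [] at hglob
      rw [hexp] at hglob
      nlinarith [hglob, hcvx, hl]
    -- conclude as t → 0
    rw [hA]
    by_contra hcon
    push_neg at hcon
    set ε : ℝ := φ x + l⁻¹ * A - φ u with hεdef
    have hε : 0 < ε := by rw [hεdef]; linarith
    set t : ℝ := min 1 (ε * l / (B + 1)) with htdef
    have ht0 : 0 < t := lt_min one_pos (by positivity)
    have ht1 : t ≤ 1 := min_le_left _ _
    have htB : t * B ≤ ε * l * B / (B + 1) := by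
      have h1 : t ≤ ε * l / (B + 1) := min_le_right _ _
      calc t * B ≤ (ε * l / (B + 1)) * B := mul_le_mul_of_nonneg_right h1 hB
        _ = ε * l * B / (B + 1) := by ring
    have htB2 : t * B < 2 * l * ε := by
      have hBB : ε * l * B / (B + 1) < 2 * l * ε := by
        rw [div_lt_iff₀ (by positivity : (0:ℝ) < B + 1)]
        nlinarith [mul_pos hε hl, mul_nonneg (mul_pos hε hl).le hB]
      exact lt_of_le_of_lt htB hBB
    have hk := key t ht0 ht1
    have hφu : φ u = φ x + l⁻¹ * A - ε := by rw [hεdef]; ring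
    rw [hφu] at hk
    have hlA : 2 * l * t * (φ x + l⁻¹ * A - ε - φ x) = 2 * t * A - 2 * l * t * ε := by
      field_simp
      ring
    rw [hlA] at hk
    nlinarith [hk, mul_lt_mul_of_pos_left htB2 ht0]
  · rw [smul_smul, mul_inv_cancel₀ hl.ne']
    module


lemma prox_unique {l : ℝ} (hl : 0 < l) {x x' g g' : E} (hg : g ∈ subdiff φ x)
    (hg' : g' ∈ subdiff φ x') (heq : x + l • g = x' + l • g') : x = x' := by
  have hmono := subdiff_mono hg hg'
  have h2 : x - x' = l • g' - l • g := by
    rw [sub_eq_sub_iff_add_eq_add, heq, add_comm]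
  have h3 : x - x' = l • (g' - g) := by rw [smul_sub]; exact h2
  rw [h3] at hmono
  have h4 : (inner ℝ (g - g') (l • (g' - g)) : ℝ) = - (l * ‖g - g'‖ ^ 2) := by
    rw [real_inner_smul_right]
    have : g' - g = -(g - g') := by module
    rw [this, inner_neg_right, real_inner_self_eq_norm_sq]
    ring
  rw [h4] at hmono
  have h5 : ‖g - g'‖ ^ 2 ≤ 0 := by nlinarith
  have h6 : g - g' = 0 := by
    have := norm_eq_zero.1 (le_antisymm (by nlinarith [norm_nonneg (g - g')]) (norm_nonneg _))
    exact this
  have h7 : g' = g := by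
    have := sub_eq_zero.1 h6; rw [this]
  rw [h7] at h2
  have : x - x' = 0 := by rw [h2]; module
  exact sub_eq_zero.1 this

lemma prox_approx (hconv : ConvexOn ℝ Set.univ φ) (hlip : LipschitzWith L φ)
    {l : ℝ} (hl : 0 < l) {x g : E} (hg : g ∈ subdiff φ x) (y' : E) :
    ∃ x' g', g' ∈ subdiff φ x' ∧ x' + l • g' = y' ∧ ‖x' - x‖ ≤ ‖y' - (x + l • g)‖ := by
  obtain ⟨x', g', hg', heq⟩ := exists_prox hconv hlip hl y'
  refine ⟨x', g', hg', heq, ?_⟩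
  have hmono := subdiff_mono hg' hg
  have hx' : x' = y' - l • g' := by rw [← heq]; module
  have hid : x' - x = (y' - (x + l • g)) - l • (g' - g) := by
    rw [hx', smul_sub]; module
  have hsq : ‖x' - x‖ ^ 2
      = (inner ℝ (x' - x) (y' - (x + l • g)) : ℝ) - l * inner ℝ (g' - g) (x' - x) := by
    calc ‖x' - x‖ ^ 2 = (inner ℝ (x' - x) (x' - x) : ℝ) := (real_inner_self_eq_norm_sq _).symm
      _ = (inner ℝ (x' - x) ((y' - (x + l • g)) - l • (g' - g)) : ℝ) := by rw [← hid]
      _ = (inner ℝ (x' - x) (y' - (x + l • g)) : ℝ) - l * inner ℝ (g' - g) (x' - x) := by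
          rw [inner_sub_right, real_inner_smul_right, real_inner_comm (x' - x) (g' - g)]
  have hcs : (inner ℝ (x' - x) (y' - (x + l • g)) : ℝ) ≤ ‖x' - x‖ * ‖y' - (x + l • g)‖ :=
    real_inner_le_norm _ _
  have h1 : ‖x' - x‖ ^ 2 ≤ ‖x' - x‖ * ‖y' - (x + l • g)‖ := by nlinarith
  by_cases h0 : ‖x' - x‖ = 0
  · rw [h0]; exact norm_nonneg _
  · have hpos : 0 < ‖x' - x‖ := lt_of_le_of_ne (norm_nonneg _) (Ne.symm h0)
    nlinarith

lemma subdiff_limit (hlip : LipschitzWith L φ) {x : E} {xs gs : ℕ → E}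
    (hxs : Filter.Tendsto xs Filter.atTop (nhds x)) (hgs : ∀ n, gs n ∈ subdiff φ (xs n)) :
    ∃ g ∈ subdiff φ x, ∃ σ : ℕ → ℕ, StrictMono σ ∧
      Filter.Tendsto (gs ∘ σ) Filter.atTop (nhds g) := by
  have hbd : ∀ n, gs n ∈ closedBall (0 : E) (L : ℝ) := fun n =>
    mem_closedBall_zero_iff.2 (subdiff_norm_le hlip (hgs n))
  obtain ⟨g, _, σ, hσ, hconv⟩ :=
    tendsto_subseq_of_bounded (isBounded_closedBall (x := (0:E)) (r := (L:ℝ))) hbd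
  refine ⟨g, ?_, σ, hσ, hconv⟩
  intro u
  have hxσ : Filter.Tendsto (xs ∘ σ) Filter.atTop (nhds x) :=
    hxs.comp hσ.tendsto_atTop
  have hT : Filter.Tendsto (fun n => φ (xs (σ n)) + (inner ℝ (gs (σ n)) (u - xs (σ n)) : ℝ))
      Filter.atTop (nhds (φ x + inner ℝ g (u - x))) := by
    apply Filter.Tendsto.add
    · exact (hlip.continuous.tendsto x).comp hxσ
    · exact Filter.Tendsto.inner hconv (Filter.Tendsto.sub tendsto_const_nhds hxσ)
  exact le_of_tendsto hT (Filter.Eventually.of_forall fun n => hgs (σ n) u)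

lemma subdiff_nonempty (hconv : ConvexOn ℝ Set.univ φ) (hlip : LipschitzWith L φ) (x : E) :
    ∃ g, g ∈ subdiff φ x := by
  have h : ∀ n : ℕ, ∃ p : E × E, p.2 ∈ subdiff φ p.1 ∧ p.1 + ((1:ℝ)/(n+1)) • p.2 = x := by
    intro n
    obtain ⟨a, g, hg, he⟩ := exists_prox hconv hlip
      (by positivity : (0:ℝ) < 1/(n+1)) x
    exact ⟨(a, g), hg, he⟩
  choose p hp1 hp2 using h
  have hdist : ∀ n : ℕ, dist ((p n).1) x ≤ (L : ℝ) / (n + 1) := by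
    intro n
    have : (p n).1 - x = -(((1:ℝ)/(n+1)) • (p n).2) := by
      rw [← hp2 n]; module
    rw [dist_eq_norm, this, norm_neg, norm_smul, Real.norm_eq_abs]
    have h1 : |(1:ℝ)/(n+1)| = 1/(n+1) := abs_of_pos (by positivity)
    rw [h1]
    have h2 : ‖(p n).2‖ ≤ (L : ℝ) := subdiff_norm_le hlip (hp1 n)
    have h3 : (0:ℝ) < 1/(n+1) := by positivity
    calc 1/(n+1) * ‖(p n).2‖ ≤ 1/(n+1) * (L:ℝ) := by nlinarith
      _ = (L:ℝ)/(n+1) := by ring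
  have hxs : Filter.Tendsto (fun n => (p n).1) Filter.atTop (nhds x) := by
    rw [tendsto_iff_dist_tendsto_zero]
    apply squeeze_zero (fun n => dist_nonneg) hdist
    have := (tendsto_const_div_atTop_nhds_zero_nat (L:ℝ)).comp (Filter.tendsto_add_atTop_nat 1)
    simp only [Function.comp_def] at this
    convert this using 2 with n
    push_cast
    ring
  obtain ⟨g, hg, _⟩ := subdiff_limit hlip hxs hp1
  exact ⟨g, hg⟩

lemma exists_level (hconv : ConvexOn ℝ Set.univ φ) (hlip : LipschitzWith L φ)
    {l : ℝ} (hl : 0 < l) {z : E} {η : ℝ} {e : E} {t : ℝ}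
    {x1 x2 g1 g2 : E} (hx1 : x1 ∈ closedBall z η) (hx2 : x2 ∈ closedBall z η)
    (hg1 : g1 ∈ subdiff φ x1) (hg2 : g2 ∈ subdiff φ x2)
    (h1 : t ≤ (inner ℝ e (x1 + l • g1) : ℝ)) (h2 : (inner ℝ e (x2 + l • g2) : ℝ) ≤ t) :
    ∃ x ∈ closedBall z η, ∃ g ∈ subdiff φ x, (inner ℝ e (x + l • g) : ℝ) = t := by
  classical
  set F1 : Set E := {x | ∃ g ∈ subdiff φ x, t ≤ (inner ℝ e (x + l • g) : ℝ)} with hF1def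
  set F2 : Set E := {x | ∃ g ∈ subdiff φ x, (inner ℝ e (x + l • g) : ℝ) ≤ t} with hF2def
  have hclosed : ∀ (s : ℝ → ℝ → Prop), (∀ a : ℝ, IsClosed {b | s a b}) →
      (∀ (b : ℕ → ℝ) (c : ℝ) (a : ℝ), Filter.Tendsto b Filter.atTop (nhds c) →
        (∀ n, s a (b n)) → s a c) → True := fun _ _ _ => trivial
  have hF1 : IsClosed F1 := by
    apply IsSeqClosed.isClosed
    intro xs x hxs hlim
    choose gs hgs hts using hxs
    obtain ⟨g, hgx, σ, hσ, hgσ⟩ := subdiff_limit hlip hlim hgs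
    refine ⟨g, hgx, ?_⟩
    have hT : Filter.Tendsto (fun n => (inner ℝ e (xs (σ n) + l • gs (σ n)) : ℝ))
        Filter.atTop (nhds (inner ℝ e (x + l • g))) := by
      apply Filter.Tendsto.inner tendsto_const_nhds
      exact Filter.Tendsto.add (hlim.comp hσ.tendsto_atTop)
        (Filter.Tendsto.const_smul hgσ l)
    exact ge_of_tendsto hT (Filter.Eventually.of_forall fun n => hts (σ n))
  have hF2 : IsClosed F2 := by
    apply IsSeqClosed.isClosed
    intro xs x hxs hlim
    choose gs hgs hts using hxs
    obtain ⟨g, hgx, σ, hσ, hgσ⟩ := subdiff_limit hlip hlim hgs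
    refine ⟨g, hgx, ?_⟩
    have hT : Filter.Tendsto (fun n => (inner ℝ e (xs (σ n) + l • gs (σ n)) : ℝ))
        Filter.atTop (nhds (inner ℝ e (x + l • g))) := by
      apply Filter.Tendsto.inner tendsto_const_nhds
      exact Filter.Tendsto.add (hlim.comp hσ.tendsto_atTop)
        (Filter.Tendsto.const_smul hgσ l)
    exact le_of_tendsto hT (Filter.Eventually.of_forall fun n => hts (σ n))
  have hcover : closedBall z η ⊆ F1 ∪ F2 := by
    intro x _
    obtain ⟨g, hg⟩ := subdiff_nonempty hconv hlip x
    rcases le_total t (inner ℝ e (x + l • g) : ℝ) with h | h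
    · exact Or.inl ⟨g, hg, h⟩
    · exact Or.inr ⟨g, hg, h⟩
  obtain ⟨x, hxmem⟩ := isPreconnected_closed_iff.mp
    (convex_closedBall z η).isPreconnected F1 F2 hF1 hF2 hcover
    ⟨x1, hx1, g1, hg1, h1⟩ ⟨x2, hx2, g2, hg2, h2⟩
  have hxB := hxmem.1
  obtain ⟨gp, hgp, hgpt⟩ := hxmem.2.1
  obtain ⟨gm, hgm, hgmt⟩ := hxmem.2.2
  set a : ℝ := inner ℝ e (x + l • gm) with hadef
  set b : ℝ := inner ℝ e (x + l • gp) with hbdef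
  by_cases hab : b - a = 0
  · have : a = t := le_antisymm hgmt (by rw [show a = b by linarith]; exact hgpt)
    exact ⟨x, hxB, gm, hgm, this⟩
  · have hba : 0 < b - a := by
      rcases lt_or_gt_of_ne hab with h | h
      · exfalso; have : b < a := by linarith
        linarith
      · linarith
    set θ : ℝ := (t - a) / (b - a) with hθdef
    have hθ0 : 0 ≤ θ := div_nonneg (by linarith) hba.le
    have hθ1 : θ ≤ 1 := by
      rw [hθdef, div_le_one hba]; linarith
    refine ⟨x, hxB, gm + θ • (gp - gm), ?_, ?_⟩
    · intro u
      have e1 : (inner ℝ (gm + θ • (gp - gm)) (u - x) : ℝ)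
          = (1 - θ) * inner ℝ gm (u - x) + θ * inner ℝ gp (u - x) := by
        rw [inner_add_left, real_inner_smul_left, inner_sub_left]
        ring
      have h1' := hgm u
      have h2' := hgp u
      rw [e1]
      nlinarith [h1', h2', hθ0, hθ1]
    · have ha' : a = (inner ℝ e x : ℝ) + l * inner ℝ e gm := by
        rw [hadef, inner_add_right, real_inner_smul_right]
      have hb' : b = (inner ℝ e x : ℝ) + l * inner ℝ e gp := by
        rw [hbdef, inner_add_right, real_inner_smul_right]
      have e2 : (inner ℝ e (x + l • (gm + θ • (gp - gm))) : ℝ) = a + θ * (b - a) := by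
        rw [inner_add_right, real_inner_smul_right, inner_add_right, real_inner_smul_right,
          inner_sub_right, ha', hb']
        ring
      rw [e2, hθdef]
      field_simp
      ring
lemma packing_bound {ι : Type*} (I : Finset ι) (c : ι → E) {r S : ℝ} (hr : 0 < r) (hS : 0 ≤ S)
    (hdisj : (↑I : Set ι).PairwiseDisjoint fun i => closedBall (c i) r)
    (hsub : ∀ i ∈ I, closedBall (c i) r ⊆ closedBall (0 : E) S) :
    (I.card : ℝ) * r ^ d ≤ S ^ d := by
  classical
  set C : ENNReal := volume (closedBall (0 : E) 1) with hC
  have hC0 : C ≠ 0 := (measure_closedBall_pos volume (0:E) one_pos).ne'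
  have hCtop : C ≠ ⊤ := measure_closedBall_lt_top.ne
  have hμ : ∀ i ∈ I, volume (closedBall (c i) r) = ENNReal.ofReal (r ^ d) * C := by
    intro i _
    rw [MeasureTheory.Measure.addHaar_closedBall' volume (c i) hr.le, hC,
      finrank_euclideanSpace_fin]
  have hadd : volume (⋃ i ∈ I, closedBall (c i) r) = ∑ i ∈ I, volume (closedBall (c i) r) :=
    measure_biUnion_finset hdisj fun i _ => measurableSet_closedBall
  have h1 : ∑ i ∈ I, volume (closedBall (c i) r) = (I.card : ENNReal) * (ENNReal.ofReal (r ^ d) * C) := by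
    rw [Finset.sum_congr rfl hμ, Finset.sum_const, nsmul_eq_mul]
  have h3 : volume (⋃ i ∈ I, closedBall (c i) r) ≤ volume (closedBall (0:E) S) :=
    measure_mono (Set.iUnion₂_subset hsub)
  have h4 : volume (closedBall (0:E) S) = ENNReal.ofReal (S ^ d) * C := by
    rw [MeasureTheory.Measure.addHaar_closedBall' volume (0:E) hS, hC,
      finrank_euclideanSpace_fin]
  have h5 : (I.card : ENNReal) * ENNReal.ofReal (r ^ d) * C ≤ ENNReal.ofReal (S ^ d) * C := by
    rw [mul_assoc, ← h1, ← hadd, ← h4]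
    exact h3
  have h6 : (I.card : ENNReal) * ENNReal.ofReal (r ^ d) ≤ ENNReal.ofReal (S ^ d) :=
    (ENNReal.mul_le_mul_iff_left hC0 hCtop).1 h5
  have h7 : ENNReal.ofReal ((I.card : ℝ) * r ^ d) ≤ ENNReal.ofReal (S ^ d) := by
    rw [ENNReal.ofReal_mul (by positivity : (0:ℝ) ≤ (I.card : ℝ)), ENNReal.ofReal_natCast]
    exact h6
  exact (ENNReal.ofReal_le_ofReal_iff (by positivity)).1 h7

lemma exists_maximal_separated (A : Set E) {R r : ℝ} (hr : 0 < r) (hR : 0 ≤ R)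
    (hA : A ⊆ closedBall 0 R) :
    ∃ Z : Finset E, ↑Z ⊆ A ∧ (∀ z ∈ Z, ∀ z' ∈ Z, z ≠ z' → r < dist z z') ∧
      A ⊆ ⋃ z ∈ Z, closedBall z r := by
  classical
  obtain ⟨t, htfin, htcov⟩ := totallyBounded_iff.1
    (isCompact_closedBall (0:E) R).totallyBounded (r/2) (by positivity)
  set F : Finset E := htfin.toFinset with hF
  have hpick : ∀ x, x ∈ A → ∃ y, y ∈ F ∧ dist x y < r/2 := by
    intro x hx
    have := htcov (hA hx)
    simp only [Set.mem_iUnion] at this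
    obtain ⟨y, hy, hxy⟩ := this
    exact ⟨y, htfin.mem_toFinset.2 hy, mem_ball.1 hxy⟩
  set f : E → E := fun x => if h : x ∈ A then (hpick x h).choose else x with hf
  have hfmem : ∀ x ∈ A, f x ∈ F ∧ dist x (f x) < r/2 := by
    intro x hx
    have h := (hpick x hx).choose_spec
    simp only [hf, dif_pos hx]
    exact h
  set P : ℕ → Prop := fun n => ∃ G : Finset E, ↑G ⊆ A ∧
    (∀ z ∈ G, ∀ z' ∈ G, z ≠ z' → r < dist z z') ∧ G.card = n with hP
  have hPbound : ∀ n, P n → n ≤ F.card := by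
    rintro n ⟨G, hGA, hGsep, rfl⟩
    apply Finset.card_le_card_of_injOn f (fun a ha => (hfmem a (hGA ha)).1)
    intro a ha b hb hfab
    by_contra hne
    have h1 := (hfmem a (hGA ha)).2
    have h2 := (hfmem b (hGA hb)).2
    have h3 := hGsep a ha b hb hne
    have : dist a b < r := by
      calc dist a b ≤ dist a (f a) + dist (f a) b := dist_triangle _ _ _
        _ < r/2 + r/2 := by
            have hab2 : dist (f a) b = dist b (f b) := by rw [hfab, dist_comm]
            rw [hab2]
            exact add_lt_add h1 h2
        _ = r := by ring
    linarith
  have hP0 : P 0 := ⟨∅, by simp, by simp, rfl⟩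
  have hPk : P (Nat.findGreatest P F.card) :=
    Nat.findGreatest_spec (Nat.zero_le _) hP0
  obtain ⟨G, hGA, hGsep, hGcard⟩ := hPk
  refine ⟨G, hGA, hGsep, ?_⟩
  intro a ha
  by_contra hcon
  simp only [Set.mem_iUnion, mem_closedBall, not_exists] at hcon
  have hfar : ∀ z ∈ G, r < dist a z := by
    intro z hz
    have := hcon z
    push_neg at this
    exact this hz
  have haG : a ∉ G := by
    intro hmem
    have := hfar a hmem
    simp at this
    linarith
  have hP1 : P (Nat.findGreatest P F.card + 1) := by
    refine ⟨insert a G, ?_, ?_, ?_⟩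
    · intro x hx
      rcases Finset.mem_insert.1 (by exact_mod_cast hx) with rfl | hx'
      · exact ha
      · exact hGA hx'
    · intro z hz z' hz' hne
      rcases Finset.mem_insert.1 hz with rfl | hz0
      · rcases Finset.mem_insert.1 hz' with rfl | hz0'
        · exact absurd rfl hne
        · exact hfar z' hz0'
      · rcases Finset.mem_insert.1 hz' with rfl | hz0'
        · rw [dist_comm]; exact hfar z hz0
        · exact hGsep z hz0 z' hz0' hne
    · rw [Finset.card_insert_of_notMem haG, hGcard]
  exact Nat.findGreatest_is_greatest (Nat.lt_succ_self _)
    (hPbound _ hP1) hP1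

end Aux

set_option maxHeartbeats 2000000 in
/-- covering number bound for the near-singularity sets
`Σ_{η,α} = {x : diam(∂φ(B(x,η))) ≥ α}` of a convex Lipschitz function: `Σ_{η,α} ∩ B(0,R)`
can be covered by at most `48 d² (R+4η)^(d-1) Lip(φ)/(α η^(d-1))` closed balls of radius `8η`. -/
theorem covering_near_singular_set (d : ℕ) (L : NNReal) (φ : EuclideanSpace ℝ (Fin d) → ℝ)
    (hconv : ConvexOn ℝ Set.univ φ) (hlip : LipschitzWith L φ)
    (α η R : ℝ) (hα : 0 < α) (hη : 0 < η) (hR : 0 < R) :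
    ∃ Z : Finset (EuclideanSpace ℝ (Fin d)),
      (Z.card : ℝ) ≤ 48 * (d : ℝ) ^ 2 * (R + 4 * η) ^ (d - 1) * (L : ℝ) / (α * η ^ (d - 1)) ∧
      {x : EuclideanSpace ℝ (Fin d) | α ≤ Metric.diam (subdiffSet φ (closedBall x η))} ∩
          closedBall 0 R ⊆ ⋃ z ∈ Z, closedBall z (8 * η) := by
  classical
  by_cases hd0 : d = 0
  · subst hd0
    refine ⟨∅, by simpa using by positivity, ?_⟩
    intro x hx
    exfalso
    have hdiam0 : Metric.diam (subdiffSet φ (closedBall x η)) = 0 :=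
      Metric.diam_subsingleton (Set.subsingleton_of_subsingleton)
    have := hx.1
    rw [Set.mem_setOf_eq, hdiam0] at this
    linarith
  have hd : 1 ≤ d := Nat.one_le_iff_ne_zero.2 hd0
  have hdR : (1:ℝ) ≤ (d:ℝ) := by exact_mod_cast hd
  have hdpos : (0:ℝ) < (d:ℝ) := by linarith
  set k : ℕ := d - 1 with hkdef
  have hdk : d = k + 1 := (Nat.succ_pred_eq_of_pos (by omega)).symm
  set A : Set (EuclideanSpace ℝ (Fin d)) :=
    {x | α ≤ Metric.diam (subdiffSet φ (closedBall x η))} ∩ closedBall 0 R with hAdef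
  have hAsub : A ⊆ closedBall 0 R := Set.inter_subset_right
  obtain ⟨Z, hZA, hZsep, hZcov⟩ := exists_maximal_separated A
    (r := 8*η) (by positivity) hR.le hAsub
  refine ⟨Z, ?_, hZcov⟩
  set Q : ℝ := R + 4*η with hQdef
  have hQpos : 0 < Q := by positivity
  rcases Finset.eq_empty_or_nonempty Z with rfl | ⟨z0, hz0⟩
  · simp only [Finset.card_empty, Nat.cast_zero]
    positivity
  -- basic facts
  have hz0A : z0 ∈ A := hZA hz0
  have hsubL : ∀ z, subdiffSet φ (closedBall z η) ⊆ closedBall (0:EuclideanSpace ℝ (Fin d)) L := by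
    intro z g hg
    rw [subdiffSet, Set.mem_iUnion] at hg
    obtain ⟨x, hgx⟩ := hg
    rw [Set.mem_iUnion] at hgx
    obtain ⟨_, hgx⟩ := hgx
    exact mem_closedBall_zero_iff.2 (subdiff_norm_le hlip hgx)
  have hαL : α ≤ 2 * L := by
    calc α ≤ Metric.diam (subdiffSet φ (closedBall z0 η)) := hz0A.1
      _ ≤ Metric.diam (closedBall (0:EuclideanSpace ℝ (Fin d)) L) :=
            Metric.diam_mono (hsubL z0) isBounded_closedBall
      _ ≤ 2 * (L:ℝ) := Metric.diam_closedBall L.coe_nonneg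
  have hL : (0:ℝ) < L := by linarith
  -- witnesses
  have hwit : ∀ z ∈ Z, ∃ x1 x2 g1 g2 : EuclideanSpace ℝ (Fin d),
      x1 ∈ closedBall z η ∧ x2 ∈ closedBall z η ∧
      g1 ∈ subdiff φ x1 ∧ g2 ∈ subdiff φ x2 ∧ α/2 < dist g1 g2 := by
    intro z hz
    have hzA := hZA hz
    have hdiam : α ≤ Metric.diam (subdiffSet φ (closedBall z η)) := hzA.1
    by_contra hcon
    push_neg at hcon
    have hall : ∀ g1 ∈ subdiffSet φ (closedBall z η), ∀ g2 ∈ subdiffSet φ (closedBall z η),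
        dist g1 g2 ≤ α/2 := by
      intro g1 hg1 g2 hg2
      rw [subdiffSet, Set.mem_iUnion] at hg1 hg2
      obtain ⟨x1, hg1⟩ := hg1
      rw [Set.mem_iUnion] at hg1
      obtain ⟨hx1, hg1⟩ := hg1
      obtain ⟨x2, hg2⟩ := hg2
      rw [Set.mem_iUnion] at hg2
      obtain ⟨hx2, hg2⟩ := hg2
      exact hcon x1 x2 g1 g2 hx1 hx2 hg1 hg2
    have : Metric.diam (subdiffSet φ (closedBall z η)) ≤ α/2 :=
      Metric.diam_le_of_forall_dist_le (by positivity) hall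
    linarith
  by_cases hcase : Q ≤ 48 * 4^d * (d:ℝ)^2 * η * ((L:ℝ)/α)
  · -- trivial covering count suffices
    have hdisj : (↑Z : Set (EuclideanSpace ℝ (Fin d))).PairwiseDisjoint
        (fun z => closedBall z (4*η)) := by
      intro z hz z' hz' hne
      apply Set.disjoint_left.2
      intro y hy hy'
      have h1 : dist y z ≤ 4*η := mem_closedBall.1 hy
      have h2 : dist y z' ≤ 4*η := mem_closedBall.1 hy'
      have h3 := hZsep z (by exact_mod_cast hz) z' (by exact_mod_cast hz') hne
      have : dist z z' ≤ 8*η := by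
        calc dist z z' ≤ dist z y + dist y z' := dist_triangle _ _ _
          _ = dist y z + dist y z' := by rw [dist_comm z y]
          _ ≤ 8*η := by linarith
      linarith
    have hsub : ∀ z ∈ Z, closedBall z (4*η) ⊆ closedBall (0:EuclideanSpace ℝ (Fin d)) Q := by
      intro z hz
      apply closedBall_subset_closedBall'
      have : dist z 0 ≤ R := mem_closedBall.1 (hAsub (hZA hz))
      rw [hQdef]; linarith
    have hpack := packing_bound (I := Z) (c := id) (by positivity : (0:ℝ) < 4*η) hQpos.le
      hdisj hsub
    -- arithmetic
    rw [le_div_iff₀ (by positivity)]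
    have hpow1 : (4*η)^d = 4^d*(η^k*η) := by
      rw [mul_pow, hdk]; ring
    have hpow2 : Q^d = Q^k*Q := by rw [hdk, pow_succ]
    rw [hpow1, hpow2] at hpack
    have hQle : Q ≤ 48 * 4^d * (d:ℝ)^2 * η * ((L:ℝ)/α) := hcase
    have h1 : ((Z.card : ℝ) * (α * η^k)) * (4^d*η) ≤ (48*(d:ℝ)^2*Q^k*(L:ℝ)) * (4^d*η) := by
      have e1 : ((Z.card : ℝ) * (α * η^k)) * (4^d*η) = ((Z.card:ℝ) * (4^d*(η^k*η))) * α := by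
        ring
      have e2 : (48*(d:ℝ)^2*Q^k*(L:ℝ)) * (4^d*η) = Q^k * (48 * 4^d * (d:ℝ)^2 * η * ((L:ℝ)/α)) * α := by
        field_simp
      rw [e1, e2]
      apply mul_le_mul_of_nonneg_right _ hα.le
      calc (Z.card:ℝ) * (4^d*(η^k*η)) ≤ Q^k*Q := hpack
        _ ≤ Q^k * (48 * 4^d * (d:ℝ)^2 * η * ((L:ℝ)/α)) :=
            mul_le_mul_of_nonneg_left hQle (by positivity)
    exact le_of_mul_le_mul_right h1 (by positivity)
  · push_neg at hcase
    -- hcase : 48 * 4 ^ d * ↑d ^ 2 * η * (↑L / α) < Q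
    set l : ℝ := Q / (d * L) with hldef
    have hl : 0 < l := by positivity
    have hlL : l * L = Q / d := by
      rw [hldef]
      field_simp
    have hQα : 48 * 4^d * (d:ℝ)^2 * η * (L:ℝ) < Q * α := by
      rw [← mul_div_assoc] at hcase
      exact (div_lt_iff₀ hα).1 hcase
    have h4d : (4:ℝ) ≤ 4^d := by
      calc (4:ℝ) = 4^1 := (pow_one 4).symm
        _ ≤ 4^d := pow_le_pow_right₀ (by norm_num) hd
    have hlα2 : l * α / 2 = Q * α / (2*(d:ℝ)*L) := by
      rw [hldef]; field_simp
    have hlα : 96 * (d:ℝ) * η < l * α / 2 := by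
      rw [hlα2, lt_div_iff₀ (by positivity)]
      have hmul := mul_le_mul_of_nonneg_right h4d
        (by positivity : (0:ℝ) ≤ 48*(d:ℝ)^2*η*(L:ℝ))
      nlinarith [hmul, hQα]
    have hηd : η ≤ (d:ℝ) * η := by nlinarith
    have hlα1 : 96 * η < l * α / 2 := by nlinarith
    set ν : ℝ := (l*α/2 - 2*η) / ((13/2)*η) with hνdef
    have hν0 : 0 < ν := by
      apply div_pos _ (by positivity)
      linarith
    set N : ℕ := ⌊ν⌋₊ + 1 with hNdef
    have hNν : ν ≤ (N:ℝ) := by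
      rw [hNdef]
      push_cast
      exact (Nat.lt_floor_add_one ν).le
    have hNν' : ((N:ℝ) - 1) ≤ ν := by
      rw [hNdef]
      push_cast
      simpa using Nat.floor_le hν0.le
    -- construction of the level points
    have hkey : ∀ z ∈ Z, ∃ w : ℕ → EuclideanSpace ℝ (Fin d),
        (∀ m, m < N → ∃ x g, x ∈ closedBall z η ∧ g ∈ subdiff φ x ∧ w m = x + l • g) ∧
        (∀ j m, j < N → m < N → j ≠ m → (13/2)*η ≤ dist (w j) (w m)) := by
      intro z hz
      obtain ⟨x1, x2, g1, g2, hx1, hx2, hg1, hg2, hdist⟩ := hwit z hz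
      set β : ℝ := ‖g1 - g2‖ with hβdef
      have hβ : α/2 < β := by rw [hβdef, ← dist_eq_norm]; exact hdist
      have hβ0 : 0 < β := by linarith
      set e : EuclideanSpace ℝ (Fin d) := β⁻¹ • (g1 - g2) with hedef
      have he : ‖e‖ = 1 := by
        rw [hedef, norm_smul, Real.norm_eq_abs, abs_of_pos (by positivity), ← hβdef]
        field_simp
      have heg : (inner ℝ e (g1 - g2) : ℝ) = β := by
        rw [hedef, real_inner_smul_left, real_inner_self_eq_norm_sq, ← hβdef]
        field_simp
      set τ1 : ℝ := inner ℝ e (x1 + l • g1) with hτ1def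
      set τ2 : ℝ := inner ℝ e (x2 + l • g2) with hτ2def
      have hx12 : dist x1 x2 ≤ 2*η := by
        calc dist x1 x2 ≤ dist x1 z + dist z x2 := dist_triangle _ _ _
          _ ≤ η + η := add_le_add (mem_closedBall.1 hx1)
              (by rw [dist_comm]; exact mem_closedBall.1 hx2)
          _ = 2*η := by ring
      have hτ : l*α/2 - 2*η ≤ τ1 - τ2 := by
        have hsplit : τ1 - τ2 = (inner ℝ e (x1 - x2) : ℝ) + l * β := by
          rw [hτ1def, hτ2def, ← inner_sub_right, ← heg, ← real_inner_smul_right,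
            ← inner_add_right]
          congr 1
          module
        have hib : |(inner ℝ e (x1 - x2) : ℝ)| ≤ 2*η := by
          calc |(inner ℝ e (x1 - x2) : ℝ)| ≤ ‖e‖ * ‖x1 - x2‖ := abs_real_inner_le_norm _ _
            _ = ‖x1 - x2‖ := by rw [he, one_mul]
            _ = dist x1 x2 := (dist_eq_norm _ _).symm
            _ ≤ 2*η := hx12
        have hib' := abs_le.1 hib
        have : l * α/2 ≤ l * β := by nlinarith
        rw [hsplit]
        linarith [hib'.1]
      have hlev : ∀ m : ℕ, m < N → ∃ x g,
          x ∈ closedBall z η ∧ g ∈ subdiff φ x ∧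
          (inner ℝ e (x + l • g) : ℝ) = τ2 + (13/2)*η*m := by
        intro m hm
        have hmN : (m:ℝ) ≤ (N:ℝ) - 1 := by
          have : (m:ℝ) + 1 ≤ (N:ℝ) := by exact_mod_cast Nat.succ_le_of_lt hm
          linarith
        have ht1 : τ2 + (13/2)*η*m ≤ τ1 := by
          have h1 : (13/2)*η*(m:ℝ) ≤ (13/2)*η*ν := by
            apply mul_le_mul_of_nonneg_left _ (by positivity)
            linarith [hNν']
          have h2 : (13/2)*η*ν = l*α/2 - 2*η := by
            rw [hνdef]
            field_simp
          linarith
        have ht2 : τ2 ≤ τ2 + (13/2)*η*m := by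
          have : (0:ℝ) ≤ (13/2)*η*(m:ℝ) := by positivity
          linarith
        obtain ⟨x, hxB, g, hg, hlvl⟩ := exists_level hconv hlip hl hx1 hx2 hg1 hg2 ht1 ht2
        exact ⟨x, g, hxB, hg, hlvl⟩
      choose xw gw hxwB hgw hlevw using hlev
      refine ⟨fun m => if h : m < N then xw m h + l • gw m h else z, ?_, ?_⟩
      · intro m hm
        exact ⟨xw m hm, gw m hm, hxwB m hm, hgw m hm, by exact dif_pos hm⟩
      · intro j m hj hm hne
        show (13/2)*η ≤ dist (if h : j < N then xw j h + l • gw j h else z)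
          (if h : m < N then xw m h + l • gw m h else z)
        rw [dif_pos hj, dif_pos hm]
        have hlj := hlevw j hj
        have hlm := hlevw m hm
        have hsubi : (inner ℝ e ((xw j hj + l • gw j hj) - (xw m hm + l • gw m hm)) : ℝ)
            = (13/2)*η*(j:ℝ) - (13/2)*η*(m:ℝ) := by
          rw [inner_sub_right, hlj, hlm]
          ring
        have h1 : (1:ℝ) ≤ |(j:ℝ) - (m:ℝ)| := by
          rcases hne.lt_or_gt with h | h
          · have : (j:ℝ) + 1 ≤ m := by exact_mod_cast Nat.succ_le_of_lt h
            rw [abs_sub_comm, abs_of_nonneg (by linarith)]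
            linarith
          · have : (m:ℝ) + 1 ≤ j := by exact_mod_cast Nat.succ_le_of_lt h
            rw [abs_of_nonneg (by linarith)]
            linarith
        have habs : (13/2)*η ≤ |(13/2)*η*(j:ℝ) - (13/2)*η*(m:ℝ)| := by
          have he1 : (13/2)*η*(j:ℝ) - (13/2)*η*(m:ℝ) = (13/2)*η*((j:ℝ)-(m:ℝ)) := by ring
          rw [he1, abs_mul, abs_of_pos (by positivity : (0:ℝ) < (13/2)*η)]
          nlinarith
        calc (13/2)*η ≤ |(13/2)*η*(j:ℝ) - (13/2)*η*(m:ℝ)| := habs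
          _ = |(inner ℝ e ((xw j hj + l • gw j hj) - (xw m hm + l • gw m hm)) : ℝ)| := by
              rw [hsubi]
          _ ≤ ‖e‖ * ‖(xw j hj + l • gw j hj) - (xw m hm + l • gw m hm)‖ :=
              abs_real_inner_le_norm _ _
          _ = dist (xw j hj + l • gw j hj) (xw m hm + l • gw m hm) := by
              rw [he, one_mul, dist_eq_norm]
    -- assemble the finite family of disjoint balls
    choose w hw1 hw2 using hkey
    set W : EuclideanSpace ℝ (Fin d) → ℕ → EuclideanSpace ℝ (Fin d) :=
      fun z m => if h : z ∈ Z then w z h m else z with hWdef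
    set I : Finset (EuclideanSpace ℝ (Fin d) × ℕ) := Z ×ˢ Finset.range N with hIdef
    have hmemI : ∀ p ∈ I, p.1 ∈ Z ∧ p.2 < N := by
      intro p hp
      rw [hIdef, Finset.mem_product, Finset.mem_range] at hp
      exact hp
    have hWmem : ∀ z (hz : z ∈ Z), ∀ m, m < N → ∃ x g, x ∈ closedBall z η ∧
        g ∈ subdiff φ x ∧ W z m = x + l • g := by
      intro z hz m hm
      obtain ⟨x, g, hx, hg, hweq⟩ := (hw1 z hz) m hm
      refine ⟨x, g, hx, hg, ?_⟩
      rw [hWdef]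
      simp only [dif_pos hz]
      exact hweq
    have hdisjB : (↑I : Set (EuclideanSpace ℝ (Fin d) × ℕ)).PairwiseDisjoint
        (fun p => closedBall (W p.1 p.2) (3*η)) := by
      intro p hp q hq hne
      have hp' := hmemI p (by exact_mod_cast hp)
      have hq' := hmemI q (by exact_mod_cast hq)
      apply Set.disjoint_left.2
      intro y hy hy'
      rw [mem_closedBall] at hy hy'
      by_cases hzz : p.1 = q.1
      · have hkk : p.2 ≠ q.2 := by
          intro h
          exact hne (Prod.ext hzz h)
        have hsep713 : (13/2)*η ≤ dist (W p.1 p.2) (W p.1 q.2) := by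
          rw [hWdef]
          simp only [dif_pos hp'.1]
          exact (hw2 p.1 hp'.1) p.2 q.2 hp'.2 hq'.2 hkk
        have : dist (W p.1 p.2) (W p.1 q.2) ≤ 6*η := by
          calc dist (W p.1 p.2) (W p.1 q.2)
              ≤ dist (W p.1 p.2) y + dist y (W p.1 q.2) := dist_triangle _ _ _
            _ = dist y (W p.1 p.2) + dist y (W p.1 q.2) := by rw [dist_comm (W p.1 p.2) y]
            _ ≤ 3*η + 3*η := by rw [← hzz] at hy'; exact add_le_add hy hy'
            _ = 6*η := by ring
        linarith
      · obtain ⟨x, g, hxB, hg, hWeq⟩ := hWmem p.1 hp'.1 p.2 hp'.2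
        obtain ⟨x2', g2', hxB2, hg2', hWeq2⟩ := hWmem q.1 hq'.1 q.2 hq'.2
        obtain ⟨xa, ga, hga, hya, hxa⟩ := prox_approx hconv hlip hl hg y
        obtain ⟨xb, gb, hgb, hyb, hxb⟩ := prox_approx hconv hlip hl hg2' y
        have hxaxb : xa = xb := prox_unique hl hga hgb (by rw [hya, hyb])
        have hda : dist xa x ≤ 3*η := by
          rw [dist_eq_norm]
          calc ‖xa - x‖ ≤ ‖y - (x + l • g)‖ := hxa
            _ = dist y (W p.1 p.2) := by rw [dist_eq_norm, hWeq]
            _ ≤ 3*η := hy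
        have hdb : dist xb x2' ≤ 3*η := by
          rw [dist_eq_norm]
          calc ‖xb - x2'‖ ≤ ‖y - (x2' + l • g2')‖ := hxb
            _ = dist y (W q.1 q.2) := by rw [dist_eq_norm, hWeq2]
            _ ≤ 3*η := hy'
        have hcontra : dist p.1 q.1 ≤ 8*η := by
          calc dist p.1 q.1 ≤ dist p.1 xa + dist xa q.1 := dist_triangle _ _ _
            _ ≤ (dist p.1 x + dist x xa) + (dist xa x2' + dist x2' q.1) := by
                gcongr <;> [exact dist_triangle _ _ _; exact dist_triangle _ _ _]
            _ ≤ (η + 3*η) + (3*η + η) := by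
                gcongr
                · rw [dist_comm]; exact mem_closedBall.1 hxB
                · rw [dist_comm]; exact hda
                · rw [hxaxb]; exact hdb
                · exact mem_closedBall.1 hxB2
            _ = 8*η := by ring
        exact absurd hcontra (not_le.2 (hZsep p.1 hp'.1 q.1 hq'.1 hzz))
    have hsubB : ∀ p ∈ I, closedBall (W p.1 p.2) (3*η) ⊆
        closedBall (0 : EuclideanSpace ℝ (Fin d)) (2*Q) := by
      intro p hp
      have hp' := hmemI p hp
      obtain ⟨x, g, hxB, hg, hWeq⟩ := hWmem p.1 hp'.1 p.2 hp'.2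
      apply closedBall_subset_closedBall'
      have h1 : dist (W p.1 p.2) 0 ≤ ‖x‖ + l * ‖g‖ := by
        rw [hWeq, dist_zero_right]
        calc ‖x + l • g‖ ≤ ‖x‖ + ‖l • g‖ := norm_add_le _ _
          _ = ‖x‖ + l * ‖g‖ := by rw [norm_smul, Real.norm_eq_abs, abs_of_pos hl]
      have h2 : ‖x‖ ≤ η + R := by
        rw [← dist_zero_right]
        calc dist x 0 ≤ dist x p.1 + dist p.1 0 := dist_triangle _ _ _
          _ ≤ η + R := add_le_add (mem_closedBall.1 hxB)
              (mem_closedBall.1 (hAsub (hZA hp'.1)))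
      have h3 : l * ‖g‖ ≤ Q := by
        calc l * ‖g‖ ≤ l * L := by
              apply mul_le_mul_of_nonneg_left (subdiff_norm_le hlip hg) hl.le
          _ = Q / d := hlL
          _ ≤ Q := by
              rw [div_le_iff₀ hdpos]
              nlinarith
      have : dist (W p.1 p.2) 0 ≤ η + R + Q := by linarith
      rw [hQdef] at this ⊢
      linarith
    have hpackB := packing_bound (I := I) (c := fun p => W p.1 p.2)
      (by positivity : (0:ℝ) < 3*η) (by positivity : (0:ℝ) ≤ 2*Q) hdisjB hsubB
    have hIcard : I.card = Z.card * N := by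
      rw [hIdef, Finset.card_product, Finset.card_range]
    -- final arithmetic
    rw [le_div_iff₀ (by positivity)]
    set c : ℝ := (Z.card : ℝ) with hcdef
    have hc0 : 0 ≤ c := Nat.cast_nonneg _
    have hN0 : (0:ℝ) < N := by
      rw [hNdef]; push_cast; positivity
    have hpack2 : c*(N:ℝ)*((3:ℝ)^d*(η^k*η)) ≤ (2:ℝ)^d*(Q^k*Q) := by
      have e1 : (3*η)^d = (3:ℝ)^d*(η^k*η) := by rw [mul_pow, hdk]; ring
      have e2 : (2*Q)^d = (2:ℝ)^d*(Q^k*Q) := by rw [mul_pow, hdk]; ring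
      have := hpackB
      rw [hIcard, e1, e2] at this
      rw [Nat.cast_mul] at this
      calc c*(N:ℝ)*((3:ℝ)^d*(η^k*η)) = ((Z.card:ℝ)*(N:ℝ))*((3:ℝ)^d*(η^k*η)) := by
            rw [hcdef]
        _ ≤ (2:ℝ)^d*(Q^k*Q) := this
    have h47 : 47*(l*α) ≤ 624*η*(N:ℝ) := by
      have hA1 : l*α/2 - 2*η ≤ (13/2)*η*(N:ℝ) := by
        have h2 : (13/2)*η*ν = l*α/2 - 2*η := by
          rw [hνdef]; field_simp
        have := mul_le_mul_of_nonneg_left hNν (by positivity : (0:ℝ) ≤ (13/2)*η)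
        linarith
      have hA2 : 2*η < l*α/96 := by linarith
      linarith
    have hlQ : l*((d:ℝ)*L) = Q := by
      rw [hldef]; field_simp
    have hNlb : 47*Q*α ≤ 624*η*(N:ℝ)*((d:ℝ)*L) := by
      have := mul_le_mul_of_nonneg_right h47 (by positivity : (0:ℝ) ≤ (d:ℝ)*L)
      calc 47*Q*α = 47*(l*α)*((d:ℝ)*L) := by rw [← hlQ]; ring
        _ ≤ 624*η*(N:ℝ)*((d:ℝ)*L) := by linarith
    have h23 : (2:ℝ)^d ≤ (3:ℝ)^d := pow_le_pow_left₀ (by norm_num) (by norm_num) d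
    -- combine
    have s1 : (47*Q*α)*(c*((3:ℝ)^d*η^k)) ≤ (624*η*(N:ℝ)*((d:ℝ)*L))*(c*((3:ℝ)^d*η^k)) :=
      mul_le_mul_of_nonneg_right hNlb (mul_nonneg hc0 (by positivity))
    have s2 : (624*η*(N:ℝ)*((d:ℝ)*L))*(c*((3:ℝ)^d*η^k))
        = (624*(d:ℝ)*L)*(c*(N:ℝ)*((3:ℝ)^d*(η^k*η))) := by ring
    have s3 : (624*(d:ℝ)*L)*(c*(N:ℝ)*((3:ℝ)^d*(η^k*η)))
        ≤ (624*(d:ℝ)*L)*((2:ℝ)^d*(Q^k*Q)) :=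
      mul_le_mul_of_nonneg_left hpack2 (by positivity)
    have s4 : (624*(d:ℝ)*L)*((2:ℝ)^d*(Q^k*Q)) ≤ (624*(d:ℝ)*L)*((3:ℝ)^d*(Q^k*Q)) := by
      apply mul_le_mul_of_nonneg_left _ (by positivity)
      apply mul_le_mul_of_nonneg_right h23 (by positivity)
    have s5 : (624*(d:ℝ)*L)*((3:ℝ)^d*(Q^k*Q)) ≤ (48*(d:ℝ)^2*Q^k*(L:ℝ))*(47*Q*(3:ℝ)^d) := by
      have : (624:ℝ)*(d:ℝ) ≤ 2256*(d:ℝ)^2 := by nlinarith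
      have hpos : (0:ℝ) ≤ (L:ℝ)*((3:ℝ)^d*(Q^k*Q)) := by positivity
      calc (624*(d:ℝ)*L)*((3:ℝ)^d*(Q^k*Q)) = (624*(d:ℝ))*((L:ℝ)*((3:ℝ)^d*(Q^k*Q))) := by ring
        _ ≤ (2256*(d:ℝ)^2)*((L:ℝ)*((3:ℝ)^d*(Q^k*Q))) := mul_le_mul_of_nonneg_right this hpos
        _ = (48*(d:ℝ)^2*Q^k*(L:ℝ))*(47*Q*(3:ℝ)^d) := by ring
    have stotal : (c*(α*η^k))*(47*Q*(3:ℝ)^d) ≤ (48*(d:ℝ)^2*Q^k*(L:ℝ))*(47*Q*(3:ℝ)^d) := by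
      calc (c*(α*η^k))*(47*Q*(3:ℝ)^d) = (47*Q*α)*(c*((3:ℝ)^d*η^k)) := by ring
        _ ≤ (624*η*(N:ℝ)*((d:ℝ)*L))*(c*((3:ℝ)^d*η^k)) := s1
        _ = (624*(d:ℝ)*L)*(c*(N:ℝ)*((3:ℝ)^d*(η^k*η))) := s2
        _ ≤ (624*(d:ℝ)*L)*((2:ℝ)^d*(Q^k*Q)) := s3
        _ ≤ (624*(d:ℝ)*L)*((3:ℝ)^d*(Q^k*Q)) := s4
        _ ≤ (48*(d:ℝ)^2*Q^k*(L:ℝ))*(47*Q*(3:ℝ)^d) := s5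
    exact le_of_mul_le_mul_right stotal (by positivity)
end

section
/- Let φ : ℝ^d → ℝ be a convex, Lipschitz continuous function with Lipschitz constant Lip(φ). Then for every η, R > 0 and q > 1, ∫_{B(0,R)} diam(∂φ(B(x,η)))^q dx ≤ c_{d,q,R,η} · Lip(φ)^q · η, where c_{d,q,R,η} = 48 d² β_d 2^{3d+q−1} (q/(q−1)) (R+4η)^{d−1}, β_d being the Lebesgue volume of the unit ball of ℝ^d, and the integral is with respect to Lebesgue measure. -/
open Metric Set MeasureTheory
open Filter

namespace Statement5

variable {d : ℕ}

/-- coordinate vector -/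
noncomputable def evec (d : ℕ) (i : Fin d) : EuclideanSpace ℝ (Fin d) :=
  EuclideanSpace.single i (1:ℝ)

lemma norm_evec (i : Fin d) : ‖evec d i‖ = 1 := by
  simp [evec, EuclideanSpace.norm_single]

variable {L : NNReal} {φ : EuclideanSpace ℝ (Fin d) → ℝ}

lemma subdiff_inner_le {y g z : EuclideanSpace ℝ (Fin d)} (hg : g ∈ subdiff φ y) :
    (inner ℝ g (z - y) : ℝ) ≤ φ z - φ y := by
  have := hg z; linarith

lemma lip_abs (hlip : LipschitzWith L φ) (a b : EuclideanSpace ℝ (Fin d)) :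
    |φ a - φ b| ≤ L * ‖a - b‖ := by
  have := hlip.dist_le_mul a b
  rwa [Real.dist_eq, dist_eq_norm] at this

lemma subdiff_norm_le (hlip : LipschitzWith L φ) {y g : EuclideanSpace ℝ (Fin d)}
    (hg : g ∈ subdiff φ y) : ‖g‖ ≤ L := by
  have h1 : (inner ℝ g ((y + g) - y) : ℝ) ≤ φ (y + g) - φ y := subdiff_inner_le hg
  have h2 : φ (y + g) - φ y ≤ L * ‖g‖ := by
    have := lip_abs hlip (y + g) y
    simp only [add_sub_cancel_left] at this
    exact (abs_le.1 this).2
  have h4 : ‖g‖ ^ 2 ≤ L * ‖g‖ := by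
    have h3 : (inner ℝ g ((y + g) - y) : ℝ) = ‖g‖ ^ 2 := by
      rw [add_sub_cancel_left, real_inner_self_eq_norm_sq]
    rw [h3] at h1; linarith
  nlinarith [norm_nonneg g, L.coe_nonneg]

lemma subdiffSet_subset (hlip : LipschitzWith L φ) (A : Set (EuclideanSpace ℝ (Fin d))) :
    subdiffSet φ A ⊆ closedBall 0 L := by
  intro g hg
  simp only [subdiffSet, mem_iUnion] at hg
  obtain ⟨y, -, hgy⟩ := hg
  simpa [mem_closedBall, dist_eq_norm] using subdiff_norm_le hlip hgy

lemma subdiffSet_isBounded (hlip : LipschitzWith L φ) (A : Set (EuclideanSpace ℝ (Fin d))) :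
    Bornology.IsBounded (subdiffSet φ A) :=
  (isBounded_closedBall).subset (subdiffSet_subset hlip A)

lemma diam_subdiffSet_le (hlip : LipschitzWith L φ) (A : Set (EuclideanSpace ℝ (Fin d))) :
    diam (subdiffSet φ A) ≤ 2 * L := by
  calc diam (subdiffSet φ A) ≤ diam (closedBall (0:EuclideanSpace ℝ (Fin d)) L) :=
        diam_mono (subdiffSet_subset hlip A) isBounded_closedBall
    _ ≤ 2 * L := diam_closedBall L.2

/-- slope monotonicity along a direction -/
lemma slope_mono (hconv : ConvexOn ℝ Set.univ φ) (x v : EuclideanSpace ℝ (Fin d))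
    {a b ζ : ℝ} (hab : a ≤ b) (hζ : 0 ≤ ζ) :
    φ (x + (a+ζ)•v) - φ (x + a•v) ≤ φ (x + (b+ζ)•v) - φ (x + b•v) := by
  rcases eq_or_lt_of_le hζ with hz | hz
  · simp [← hz]
  have ht : 0 < b + ζ - a := by linarith
  set lam : ℝ := (b - a) / (b + ζ - a) with hlam
  set mu : ℝ := ζ / (b + ζ - a) with hmu
  have hlam0 : 0 ≤ lam := div_nonneg (by linarith) ht.le
  have hmu0 : 0 ≤ mu := div_nonneg hζ ht.le
  have hsum : lam + mu = 1 := by rw [hlam, hmu]; field_simp; ring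
  have hs2 : lam * a + mu * (b+ζ) = a + ζ := by rw [hlam, hmu]; field_simp; ring
  have hs3 : mu * a + lam * (b+ζ) = b := by rw [hlam, hmu]; field_simp; ring
  have key : ∀ c1 c2 : ℝ, (lam * c1 + mu * c2) • v =
      lam • (c1 • v) + mu • (c2 • v) := by
    intro c1 c2; rw [add_smul, smul_smul, smul_smul]
  have comb : ∀ c1 c2 : ℝ, lam • (x + c1 • v) + mu • (x + c2 • v)
      = x + (lam * c1 + mu * c2) • v := by
    intro c1 c2
    rw [smul_add, smul_add, key]
    have : lam • x + mu • x = x := by rw [← add_smul, hsum, one_smul]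
    rw [← add_assoc, add_assoc (lam • x), add_comm (lam • (c1 • v)), ← add_assoc,
      this, add_assoc]
  have comb' : ∀ c1 c2 : ℝ, mu • (x + c1 • v) + lam • (x + c2 • v)
      = x + (mu * c1 + lam * c2) • v := by
    intro c1 c2
    rw [add_comm (mu • _), comb, add_comm (lam * c2)]
  have h1 := hconv.2 (mem_univ (x + a • v)) (mem_univ (x + (b+ζ) • v)) hlam0 hmu0 hsum
  have h2 := hconv.2 (mem_univ (x + a • v)) (mem_univ (x + (b+ζ) • v)) hmu0 hlam0
    (by linarith)
  rw [comb, hs2] at h1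
  rw [comb', hs3] at h2
  simp only [smul_eq_mul] at h1 h2
  have hcomb : lam * φ (x + a • v) + mu * φ (x + (b+ζ) • v)
      + (mu * φ (x + a • v) + lam * φ (x + (b+ζ) • v))
      = φ (x + a • v) + φ (x + (b+ζ) • v) := by
    linear_combination (φ (x + a • v) + φ (x + (b+ζ) • v)) * hsum
  linarith [h1, h2, hcomb]

/-- existence of approximate subdifferential points (via prox) -/
lemma exists_near_subdiff (hconv : ConvexOn ℝ Set.univ φ) (hlip : LipschitzWith L φ)
    (hL : 0 < (L:ℝ)) (z : EuclideanSpace ℝ (Fin d)) {ε : ℝ} (hε : 0 < ε) :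
    ∃ p h, h ∈ subdiff φ p ∧ ‖p - z‖ ≤ ε := by
  set c : ℝ := ε / L with hc
  have hc0 : 0 < c := div_pos hε hL
  set F : EuclideanSpace ℝ (Fin d) → ℝ :=
    fun w => φ w + (1/(2*c)) * ‖w - z‖^2 with hF
  have hFcont : Continuous F := by
    apply (hlip.continuous).add
    exact continuous_const.mul (((continuous_id.sub continuous_const).norm).pow 2)
  have hr0 : (0:ℝ) ≤ 2*c*L := by positivity
  obtain ⟨p, hpK, hpmin⟩ := (isCompact_closedBall z (2*c*L)).exists_isMinOn
    ⟨z, mem_closedBall_self hr0⟩ hFcont.continuousOn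
  have hFz : F z = φ z := by simp [hF]
  have hglob : ∀ w, F p ≤ F w := by
    intro w
    by_cases hw : w ∈ closedBall z (2*c*L)
    · exact hpmin hw
    · have hwz : 2*c*L < ‖w - z‖ := by
        have h0 := hw
        simp only [mem_closedBall, dist_eq_norm, not_le] at h0
        exact h0
      have h2 : F z ≤ F w := by
        have hphi : φ z - φ w ≤ L * ‖w - z‖ := by
          have h3 := lip_abs hlip z w
          rw [norm_sub_rev] at h3
          exact (abs_le.1 h3).2
        have h4 : (L:ℝ) * ‖w - z‖ ≤ (1/(2*c)) * ‖w - z‖^2 := by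
          rw [div_mul_eq_mul_div, le_div_iff₀ (by positivity)]
          nlinarith [norm_nonneg (w - z)]
        rw [hFz, hF]
        simp only
        linarith
      exact le_trans (hpmin (mem_closedBall_self hr0)) h2
  have hsub : c⁻¹ • (z - p) ∈ subdiff φ p := by
    intro u
    have hinner : (inner ℝ (c⁻¹ • (z - p)) (u - p) : ℝ)
        = -(1/c) * (inner ℝ (p - z) (u - p) : ℝ) := by
      rw [real_inner_smul_left]
      have hzp : (z - p) = -(p - z) := by abel
      rw [hzp, inner_neg_left]
      field_simp
    have key : ∀ s : ℝ, 0 < s → s ≤ 1 →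
        -(1/c) * (inner ℝ (p - z) (u - p) : ℝ)
          ≤ (φ u - φ p) + s * ‖u - p‖^2 / (2*c) := by
      intro s hs0 hs1
      have hpt : (1-s) • p + s • u = p + s • (u - p) := by
        rw [smul_sub, sub_smul, one_smul]; abel
      have hcv := hconv.2 (mem_univ p) (mem_univ u) (by linarith : (0:ℝ) ≤ 1 - s)
        hs0.le (by ring)
      rw [hpt] at hcv
      simp only [smul_eq_mul] at hcv
      have hmin := hglob (p + s • (u - p))
      have hnorm : ‖p + s • (u - p) - z‖^2
          = ‖p - z‖^2 + 2 * (s * (inner ℝ (p - z) (u - p) : ℝ)) + s^2 * ‖u - p‖^2 := by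
        have hre : p + s • (u - p) - z = (p - z) + s • (u - p) := by abel
        rw [hre, norm_add_sq_real, real_inner_smul_right, norm_smul]
        simp [abs_of_nonneg hs0.le, mul_pow]
      rw [hF] at hmin
      simp only at hmin
      rw [hnorm] at hmin
      have hstep : 0 ≤ s * (φ u - φ p)
          + (1/(2*c)) * (2 * (s * (inner ℝ (p - z) (u - p) : ℝ)) + s^2 * ‖u - p‖^2) := by
        nlinarith [hmin, hcv]
      have h6 : 0 ≤ s * ((φ u - φ p) + (1/c) * (inner ℝ (p - z) (u - p) : ℝ)
          + s * ‖u - p‖^2 / (2*c)) := by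
        have hexp : s * ((φ u - φ p) + (1/c) * (inner ℝ (p - z) (u - p) : ℝ)
            + s * ‖u - p‖^2 / (2*c))
            = s * (φ u - φ p)
              + (1/(2*c)) * (2 * (s * (inner ℝ (p - z) (u - p) : ℝ)) + s^2 * ‖u - p‖^2) := by
          field_simp
          ring
        rw [hexp]
        exact hstep
      have h8 : 0 ≤ (φ u - φ p) + (1/c) * (inner ℝ (p - z) (u - p) : ℝ)
          + s * ‖u - p‖^2 / (2*c) := by
        by_contra hcon
        push_neg at hcon
        nlinarith [mul_pos hs0 (neg_pos.2 hcon)]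
      linarith
    have lim : -(1/c) * (inner ℝ (p - z) (u - p) : ℝ) ≤ φ u - φ p := by
      apply le_of_forall_pos_le_add
      intro δ hδ
      have hs0 : 0 < min 1 (2*c*δ/(‖u - p‖^2+1)) := lt_min one_pos (by positivity)
      have h9 := key _ hs0 (min_le_left _ _)
      have h10 : (min 1 (2*c*δ/(‖u - p‖^2+1))) * ‖u - p‖^2 / (2*c) ≤ δ := by
        have hsle : min 1 (2*c*δ/(‖u - p‖^2+1)) ≤ 2*c*δ/(‖u - p‖^2+1) :=
          min_le_right _ _
        rw [div_le_iff₀ (by positivity : (0:ℝ) < 2*c)]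
        have hN0 : (0:ℝ) ≤ ‖u - p‖^2 := by positivity
        calc (min 1 (2*c*δ/(‖u - p‖^2+1))) * ‖u - p‖^2
            ≤ (2*c*δ/(‖u - p‖^2+1)) * ‖u - p‖^2 := by
              apply mul_le_mul_of_nonneg_right hsle hN0
          _ ≤ δ * (2*c) := by
              rw [div_mul_eq_mul_div, div_le_iff₀ (by positivity)]
              nlinarith
      linarith
    rw [hinner]
    linarith
  refine ⟨p, c⁻¹ • (z - p), hsub, ?_⟩
  have hnle : ‖c⁻¹ • (z - p)‖ ≤ L := subdiff_norm_le hlip hsub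
  have hnz : ‖p - z‖ = c * ‖c⁻¹ • (z - p)‖ := by
    rw [norm_smul, norm_inv, Real.norm_eq_abs, abs_of_pos hc0, norm_sub_rev]
    field_simp
  rw [hnz]
  calc c * ‖c⁻¹ • (z - p)‖ ≤ c * L := by
        apply mul_le_mul_of_nonneg_left hnle hc0.le
    _ = ε := by rw [hc]; field_simp

/-- the coordinate second-difference quantity -/
noncomputable def Del (φ : EuclideanSpace ℝ (Fin d) → ℝ) (ρ : ℝ) (i : Fin d)
    (x : EuclideanSpace ℝ (Fin d)) : ℝ :=
  (φ (x + (ρ + 4*d*ρ) • evec d i) - φ (x + ρ • evec d i)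
    - φ (x + (-ρ) • evec d i) + φ (x + (-(ρ + 4*d*ρ)) • evec d i)) / (4*d*ρ)

lemma Del_nonneg (hconv : ConvexOn ℝ Set.univ φ) {ρ : ℝ} (hρ : 0 < ρ) (hd : 0 < d)
    (i : Fin d) (x : EuclideanSpace ℝ (Fin d)) : 0 ≤ Del φ ρ i x := by
  have hζ : (0:ℝ) ≤ 4*d*ρ := by positivity
  have h := slope_mono hconv x (evec d i) (a := -(ρ + 4*d*ρ)) (b := ρ) (ζ := 4*d*ρ)
    (by nlinarith) hζ
  have hz : 0 < 4*(d:ℝ)*ρ := by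
    have : (1:ℝ) ≤ (d:ℝ) := by exact_mod_cast hd
    nlinarith
  rw [Del]
  apply div_nonneg _ hz.le
  have e1 : -(ρ + 4*(d:ℝ)*ρ) + 4*(d:ℝ)*ρ = -ρ := by ring
  rw [e1] at h
  linarith

lemma inner_evec (g : EuclideanSpace ℝ (Fin d)) (i : Fin d) :
    (inner ℝ g (evec d i) : ℝ) = g i := by
  simp [evec, EuclideanSpace.inner_single_right]

lemma norm_le_sum_abs (v : EuclideanSpace ℝ (Fin d)) : ‖v‖ ≤ ∑ i, |v i| := by
  rw [EuclideanSpace.norm_eq]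
  have h1 : ∑ i, ‖v i‖^2 ≤ (∑ i, |v i|)^2 := by
    simp only [Real.norm_eq_abs]
    exact Finset.sum_sq_le_sq_sum_of_nonneg (fun i _ => abs_nonneg _)
  calc √(∑ i, ‖v i‖^2) ≤ √((∑ i, |v i|)^2) := Real.sqrt_le_sqrt h1
    _ = ∑ i, |v i| := Real.sqrt_sq (Finset.sum_nonneg fun i _ => abs_nonneg _)

lemma breg_bound (hconv : ConvexOn ℝ Set.univ φ) (hlip : LipschitzWith L φ)
    (hL : 0 < (L:ℝ)) (x : EuclideanSpace ℝ (Fin d)) {ρ σ : ℝ} (hρ : 0 < ρ) (hσ : 0 < σ)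
    {y g : EuclideanSpace ℝ (Fin d)} (hy : y ∈ closedBall x ρ) (hg : g ∈ subdiff φ y)
    (i : Fin d) :
    ∃ a : ℝ, |a| ≤ ρ ∧ ‖(x + a • evec d i) - y‖ ≤ ρ ∧
      φ (x + a • evec d i) - φ y - (inner ℝ g ((x + a • evec d i) - y) : ℝ)
        ≤ 2*σ*ρ*L + ρ * diam (subdiffSet φ (closedBall x ((1+σ)*ρ))) := by
  have hD0 : 0 ≤ diam (subdiffSet φ (closedBall x ((1+σ)*ρ))) := diam_nonneg
  set e := evec d i with he
  set a : ℝ := inner ℝ (y - x) e with ha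
  have hyx : ‖y - x‖ ≤ ρ := by rw [← dist_eq_norm]; exact mem_closedBall.1 hy
  have haρ : |a| ≤ ρ := by
    calc |a| ≤ ‖y - x‖ * ‖e‖ := abs_real_inner_le_norm _ _
      _ ≤ ρ := by rw [he, norm_evec]; simpa using hyx
  set xt := x + a • e with hxt
  have hxty : ‖xt - y‖ ≤ ρ := by
    have hid : xt - y = a • e - (y - x) := by rw [hxt]; abel
    have hsq : ‖xt - y‖^2 = ‖y - x‖^2 - a^2 := by
      rw [hid, norm_sub_sq_real, real_inner_smul_left, norm_smul, he, norm_evec]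
      have : (inner ℝ e (y - x) : ℝ) = a := by rw [real_inner_comm, ← ha]
      rw [this]
      simp [Real.norm_eq_abs, mul_pow, sq_abs]
      ring
    nlinarith [norm_nonneg (xt - y), norm_nonneg (y - x), sq_nonneg a, hρ]
  obtain ⟨p, h, hh, hpxt⟩ := exists_near_subdiff hconv hlip hL xt
    (ε := σ*ρ) (by positivity)
  have hxtx : ‖xt - x‖ ≤ ρ := by
    rw [hxt]
    simpa [norm_smul, he, norm_evec, Real.norm_eq_abs] using haρ
  have hpx : p ∈ closedBall x ((1+σ)*ρ) := by
    rw [mem_closedBall, dist_eq_norm]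
    have : p - x = (p - xt) + (xt - x) := by abel
    rw [this]
    calc ‖(p - xt) + (xt - x)‖ ≤ ‖p - xt‖ + ‖xt - x‖ := norm_add_le _ _
      _ ≤ σ*ρ + ρ := add_le_add hpxt hxtx
      _ = (1+σ)*ρ := by ring
  have hyB : y ∈ closedBall x ((1+σ)*ρ) := by
    rw [mem_closedBall]
    calc dist y x ≤ ρ := mem_closedBall.1 hy
      _ ≤ (1+σ)*ρ := by nlinarith
  have hgmem : g ∈ subdiffSet φ (closedBall x ((1+σ)*ρ)) := by
    simp only [subdiffSet, mem_iUnion]; exact ⟨y, hyB, hg⟩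
  have hhmem : h ∈ subdiffSet φ (closedBall x ((1+σ)*ρ)) := by
    simp only [subdiffSet, mem_iUnion]; exact ⟨p, hpx, hh⟩
  have hgh : ‖h - g‖ ≤ diam (subdiffSet φ (closedBall x ((1+σ)*ρ))) := by
    rw [← dist_eq_norm]
    exact dist_le_diam_of_mem (subdiffSet_isBounded hlip _) hhmem hgmem
  have c1 : φ xt - φ p ≤ (L:ℝ) * (σ*ρ) := by
    have h1 := (abs_le.1 (lip_abs hlip xt p)).2
    have h2 : ‖xt - p‖ ≤ σ*ρ := by rw [norm_sub_rev]; exact hpxt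
    calc φ xt - φ p ≤ L * ‖xt - p‖ := h1
      _ ≤ (L:ℝ) * (σ*ρ) := by
        apply mul_le_mul_of_nonneg_left h2 hL.le
  have c2 : φ p - φ y ≤ (inner ℝ h (p - y) : ℝ) := by
    have h1 := subdiff_inner_le (z := y) hh
    have h2 : p - y = -(y - p) := by abel
    rw [h2, inner_neg_right]
    linarith
  have c3 : (inner ℝ h (p - y) : ℝ) - (inner ℝ g (xt - y) : ℝ)
      ≤ (L:ℝ)*(σ*ρ) + diam (subdiffSet φ (closedBall x ((1+σ)*ρ))) * ρ := by
    have hsplit : (inner ℝ h (p - y) : ℝ) = inner ℝ h (p - xt) + inner ℝ h (xt - y) := by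
      rw [← inner_add_right]
      congr 1
      abel
    have h4 : (inner ℝ h (p - xt) : ℝ) ≤ (L:ℝ)*(σ*ρ) := by
      calc (inner ℝ h (p - xt) : ℝ) ≤ ‖h‖ * ‖p - xt‖ := real_inner_le_norm _ _
        _ ≤ (L:ℝ)*(σ*ρ) := by
          apply mul_le_mul (subdiff_norm_le hlip hh) hpxt (norm_nonneg _) hL.le
    have h5 : (inner ℝ h (xt - y) : ℝ) - (inner ℝ g (xt - y) : ℝ)
        ≤ diam (subdiffSet φ (closedBall x ((1+σ)*ρ))) * ρ := by
      have hsub : (inner ℝ h (xt - y) : ℝ) - inner ℝ g (xt - y) = inner ℝ (h - g) (xt - y) := by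
        rw [inner_sub_left]
      rw [hsub]
      calc (inner ℝ (h - g) (xt - y) : ℝ) ≤ ‖h - g‖ * ‖xt - y‖ := real_inner_le_norm _ _
        _ ≤ diam (subdiffSet φ (closedBall x ((1+σ)*ρ))) * ρ := by
          apply mul_le_mul hgh hxty (norm_nonneg _) hD0
    linarith
  refine ⟨a, haρ, hxty, ?_⟩
  nlinarith [c1, c2, c3]

lemma coord_upper (hconv : ConvexOn ℝ Set.univ φ) (hlip : LipschitzWith L φ)
    (hL : 0 < (L:ℝ)) (hd : 0 < d) (x : EuclideanSpace ℝ (Fin d)) {ρ σ : ℝ}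
    (hρ : 0 < ρ) (hσ : 0 < σ)
    {y g : EuclideanSpace ℝ (Fin d)} (hy : y ∈ closedBall x ρ) (hg : g ∈ subdiff φ y)
    (i : Fin d) :
    4*d*ρ * (g i) ≤ (φ (x + (ρ + 4*d*ρ) • evec d i) - φ (x + ρ • evec d i))
      + (2*σ*ρ*L + ρ * diam (subdiffSet φ (closedBall x ((1+σ)*ρ)))) := by
  obtain ⟨a, haρ, hxty, hbreg⟩ := breg_bound hconv hlip hL x hρ hσ hy hg i
  have hd' : (0:ℝ) < d := by exact_mod_cast hd
  have hζ0 : (0:ℝ) < 4*d*ρ := by positivity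
  set e := evec d i with he
  set ζ : ℝ := 4*d*ρ with hζ
  have t1 := subdiff_inner_le (z := x + a • e + ζ • e) hg
  have t2 : (inner ℝ g ((x + a • e + ζ • e) - y) : ℝ)
      = (inner ℝ g ((x + a • e) - y) : ℝ) + ζ * (g i) := by
    have hre : (x + a • e + ζ • e) - y = ((x + a • e) - y) + ζ • e := by abel
    rw [hre, inner_add_right, real_inner_smul_right, he, inner_evec]
  have t3 : φ (x + a • e + ζ • e) - φ (x + a • e)
      ≤ φ (x + (ρ+ζ) • e) - φ (x + ρ • e) := by
    have hsl := slope_mono hconv x e (a := a) (b := ρ) (ζ := ζ)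
      (le_of_abs_le haρ) hζ0.le
    have hpt : x + (a+ζ) • e = x + a • e + ζ • e := by rw [add_smul, add_assoc]
    rw [hpt] at hsl
    exact hsl
  rw [t2] at t1
  linarith [t1, t3, hbreg]

lemma coord_lower (hconv : ConvexOn ℝ Set.univ φ) (hlip : LipschitzWith L φ)
    (hL : 0 < (L:ℝ)) (hd : 0 < d) (x : EuclideanSpace ℝ (Fin d)) {ρ σ : ℝ}
    (hρ : 0 < ρ) (hσ : 0 < σ)
    {y g : EuclideanSpace ℝ (Fin d)} (hy : y ∈ closedBall x ρ) (hg : g ∈ subdiff φ y)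
    (i : Fin d) :
    (φ (x + (-ρ) • evec d i) - φ (x + (-(ρ + 4*d*ρ)) • evec d i))
      - (2*σ*ρ*L + ρ * diam (subdiffSet φ (closedBall x ((1+σ)*ρ))))
      ≤ 4*d*ρ * (g i) := by
  obtain ⟨a, haρ, hxty, hbreg⟩ := breg_bound hconv hlip hL x hρ hσ hy hg i
  have hd' : (0:ℝ) < d := by exact_mod_cast hd
  have hζ0 : (0:ℝ) < 4*d*ρ := by positivity
  set e := evec d i with he
  set ζ : ℝ := 4*d*ρ with hζ
  have t1 := subdiff_inner_le (z := x + a • e - ζ • e) hg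
  have t2 : (inner ℝ g ((x + a • e - ζ • e) - y) : ℝ)
      = (inner ℝ g ((x + a • e) - y) : ℝ) - ζ * (g i) := by
    have hre : (x + a • e - ζ • e) - y = ((x + a • e) - y) - ζ • e := by abel
    rw [hre, inner_sub_right, real_inner_smul_right, he, inner_evec]
  have t3 : φ (x + (-ρ) • e) - φ (x + (-(ρ+ζ)) • e)
      ≤ φ (x + a • e) - φ (x + a • e - ζ • e) := by
    have hsl := slope_mono hconv x e (a := -(ρ+ζ)) (b := a - ζ) (ζ := ζ)
      (by nlinarith [neg_abs_le a, le_of_abs_le haρ]) hζ0.le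
    have e1 : (-(ρ+ζ) + ζ) = -ρ := by ring
    have e2 : (a - ζ + ζ) = a := by ring
    rw [e1, e2] at hsl
    have hpt : x + (a - ζ) • e = x + a • e - ζ • e := by
      rw [sub_smul, add_sub_assoc]
    rw [hpt] at hsl
    exact hsl
  rw [t2] at t1
  linarith [t1, t3, hbreg]

/-- the core self-improvement estimate -/
lemma core (hconv : ConvexOn ℝ Set.univ φ) (hlip : LipschitzWith L φ) (hL : 0 < (L:ℝ))
    (hd : 0 < d) (x : EuclideanSpace ℝ (Fin d)) {ρ σ : ℝ} (hρ : 0 < ρ) (hσ : 0 < σ)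
    (hσ1 : σ ≤ 1) :
    diam (subdiffSet φ (closedBall x ρ)) ≤
      (∑ i : Fin d, Del φ ρ i x) + σ * L
        + diam (subdiffSet φ (closedBall x ((1+σ)*ρ))) / 2 := by
  have hd' : (0:ℝ) < d := by exact_mod_cast hd
  have hζ0 : (0:ℝ) < 4*d*ρ := by positivity
  set D2 := diam (subdiffSet φ (closedBall x ((1+σ)*ρ))) with hD2
  have hD0 : 0 ≤ D2 := diam_nonneg
  have hSnn : 0 ≤ ∑ i : Fin d, Del φ ρ i x :=
    Finset.sum_nonneg fun i _ => Del_nonneg hconv hρ hd i x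
  apply diam_le_of_forall_dist_le
    (by positivity)
  intro g hg g' hg'
  simp only [subdiffSet, mem_iUnion] at hg hg'
  obtain ⟨y, hy, hgy⟩ := hg
  obtain ⟨y', hy', hgy'⟩ := hg'
  rw [dist_eq_norm]
  have coordbound : ∀ (w w' : EuclideanSpace ℝ (Fin d)), w ∈ closedBall x ρ →
      w' ∈ closedBall x ρ → ∀ (u u' : EuclideanSpace ℝ (Fin d)), u ∈ subdiff φ w →
      u' ∈ subdiff φ w' → ∀ i : Fin d,
      u i - u' i ≤ Del φ ρ i x + (σ*L + D2/2)/d := by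
    intro w w' hw hw' u u' hu hu' i
    have hu1 := coord_upper hconv hlip hL hd x hρ hσ hw hu i
    have hl1 := coord_lower hconv hlip hL hd x hρ hσ hw' hu' i
    have hDel : Del φ ρ i x * (4*d*ρ)
        = (φ (x + (ρ + 4*d*ρ) • evec d i) - φ (x + ρ • evec d i))
          - (φ (x + (-ρ) • evec d i) - φ (x + (-(ρ + 4*d*ρ)) • evec d i)) := by
      rw [Del]
      field_simp
      ring
    have hc : ((σ*L + D2/2)/(d:ℝ)) * (4*d*ρ)
        = 2*(2*σ*ρ*L + ρ*D2) := by
      field_simp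
      ring
    have h1 : (u i - u' i) * (4*d*ρ)
        ≤ (Del φ ρ i x + (σ*L + D2/2)/d) * (4*d*ρ) := by
      rw [add_mul, hDel, hc]
      nlinarith [hu1, hl1]
    exact le_of_mul_le_mul_right h1 hζ0
  have habs : ∀ i : Fin d, |g i - g' i| ≤ Del φ ρ i x + (σ*L + D2/2)/d := by
    intro i
    rw [abs_sub_le_iff]
    exact ⟨coordbound y y' hy hy' g g' hgy hgy' i,
      coordbound y' y hy' hy g' g hgy' hgy i⟩
  have hnorm := norm_le_sum_abs (g - g')
  have happ : ∀ i : Fin d, (g - g') i = g i - g' i := fun i => rfl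
  have hsum : ∑ i, |(g - g') i| ≤ (∑ i, Del φ ρ i x) + σ*(L:ℝ) + D2/2 := by
    calc ∑ i, |(g - g') i| = ∑ i, |g i - g' i| := by
          simp only [happ]
      _ ≤ ∑ i : Fin d, (Del φ ρ i x + (σ*L + D2/2)/d) :=
          Finset.sum_le_sum (fun i _ => habs i)
      _ = (∑ i, Del φ ρ i x) + (d:ℝ) * ((σ*L + D2/2)/d) := by
          rw [Finset.sum_add_distrib, Finset.sum_const, Finset.card_univ,
            Fintype.card_fin, nsmul_eq_mul]
      _ = (∑ i, Del φ ρ i x) + σ*(L:ℝ) + D2/2 := by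
          rw [mul_div_cancel₀ _ (ne_of_gt hd')]
          ring
  linarith [hnorm, hsum]

lemma unroll (hconv : ConvexOn ℝ Set.univ φ) (hlip : LipschitzWith L φ)
    (hL : 0 < (L:ℝ)) (hd : 0 < d) (x : EuclideanSpace ℝ (Fin d)) {σ : ℝ}
    (hσ : 0 < σ) (hσ1 : σ ≤ 1) :
    ∀ (K : ℕ) (η : ℝ), 0 < η →
    diam (subdiffSet φ (closedBall x η)) ≤
      (∑ k ∈ Finset.range K,
        (1/2:ℝ)^k * ((∑ i : Fin d, Del φ (η*(1+σ)^k) i x) + σ*L))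
      + (1/2:ℝ)^K * (2*L) := by
  intro K
  induction K with
  | zero =>
    intro η hη
    simpa using diam_subdiffSet_le hlip (closedBall x η)
  | succ K ih =>
    intro η hη
    have hcore := core hconv hlip hL hd x hη hσ hσ1
    have hnext := ih ((1+σ)*η) (by positivity)
    have hsc : ∀ k:ℕ, ((1+σ)*η)*(1+σ)^k = η*(1+σ)^(k+1) := by
      intro k; rw [pow_succ]; ring
    simp only [hsc] at hnext
    have hhalf : diam (subdiffSet φ (closedBall x ((1+σ)*η))) / 2
        ≤ ((∑ k ∈ Finset.range K,
            (1/2:ℝ)^k * ((∑ i : Fin d, Del φ (η*(1+σ)^(k+1)) i x) + σ*L))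
          + (1/2:ℝ)^K * (2*L)) / 2 := by
      linarith [hnext]
    have hrw : (∑ k ∈ Finset.range (K+1),
          (1/2:ℝ)^k * ((∑ i : Fin d, Del φ (η*(1+σ)^k) i x) + σ*L))
        = ((∑ k ∈ Finset.range K,
            (1/2:ℝ)^k * ((∑ i : Fin d, Del φ (η*(1+σ)^(k+1)) i x) + σ*L))) / 2
          + ((∑ i : Fin d, Del φ η i x) + σ*L) := by
      rw [Finset.sum_range_succ']
      have hterm : ∀ k ∈ Finset.range K,
          (1/2:ℝ)^(k+1) * ((∑ i : Fin d, Del φ (η*(1+σ)^(k+1)) i x) + σ*L)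
          = ((1/2:ℝ)^k * ((∑ i : Fin d, Del φ (η*(1+σ)^(k+1)) i x) + σ*L)) / 2 := by
        intro k _
        rw [pow_succ]
        ring
      rw [Finset.sum_congr rfl hterm, ← Finset.sum_div]
      simp
    calc diam (subdiffSet φ (closedBall x η))
          ≤ (∑ i : Fin d, Del φ η i x) + σ*L
            + diam (subdiffSet φ (closedBall x ((1+σ)*η))) / 2 := hcore
      _ ≤ (∑ i : Fin d, Del φ η i x) + σ*L
            + (((∑ k ∈ Finset.range K,
              (1/2:ℝ)^k * ((∑ i : Fin d, Del φ (η*(1+σ)^(k+1)) i x) + σ*L))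
            + (1/2:ℝ)^K * (2*L)) / 2) := by linarith [hhalf]
      _ = (∑ k ∈ Finset.range (K+1),
            (1/2:ℝ)^k * ((∑ i : Fin d, Del φ (η*(1+σ)^k) i x) + σ*L))
          + (1/2:ℝ)^(K+1) * (2*L) := by
          rw [hrw, pow_succ]
          ring

lemma Del_continuous (hlip : LipschitzWith L φ) (ρ : ℝ) (i : Fin d) :
    Continuous (Del φ ρ i) := by
  have hφ : Continuous φ := hlip.continuous
  have hc : ∀ v : EuclideanSpace ℝ (Fin d), Continuous (fun x => φ (x + v)) := by
    intro v
    exact hφ.comp (continuous_id.add continuous_const)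
  exact ((((hc _).sub (hc _)).sub (hc _)).add (hc _)).div_const _

lemma Del_abs_le (hlip : LipschitzWith L φ) {ρ : ℝ} (hρ : 0 < ρ) (hd : 0 < d)
    (i : Fin d) (x : EuclideanSpace ℝ (Fin d)) : |Del φ ρ i x| ≤ 2*L := by
  have hd' : (0:ℝ) < d := by exact_mod_cast hd
  have hζ0 : (0:ℝ) < 4*d*ρ := by positivity
  have h1 : |φ (x + (ρ + 4*d*ρ) • evec d i) - φ (x + ρ • evec d i)| ≤ L * (4*d*ρ) := by
    have hb := lip_abs hlip (x + (ρ + 4*d*ρ) • evec d i) (x + ρ • evec d i)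
    have he : (x + (ρ + 4*d*ρ) • evec d i) - (x + ρ • evec d i) = (4*d*ρ) • evec d i := by
      rw [add_smul]; abel
    rw [he, norm_smul, norm_evec, Real.norm_eq_abs, abs_of_pos hζ0] at hb
    simpa using hb
  have h2 : |φ (x + (-ρ) • evec d i) - φ (x + (-(ρ + 4*d*ρ)) • evec d i)|
      ≤ L * (4*d*ρ) := by
    have hb := lip_abs hlip (x + (-ρ) • evec d i) (x + (-(ρ + 4*d*ρ)) • evec d i)
    have he : (x + (-ρ) • evec d i) - (x + (-(ρ + 4*d*ρ)) • evec d i)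
        = (4*d*ρ) • evec d i := by
      have hs : (-ρ : ℝ) - (-(ρ + 4*d*ρ)) = 4*d*ρ := by ring
      rw [← hs, sub_smul]; abel
    rw [he, norm_smul, norm_evec, Real.norm_eq_abs, abs_of_pos hζ0] at hb
    simpa using hb
  rw [Del, abs_div, abs_of_pos hζ0, div_le_iff₀ hζ0]
  have h3 : |φ (x + (ρ + 4*d*ρ) • evec d i) - φ (x + ρ • evec d i)
      - φ (x + (-ρ) • evec d i) + φ (x + (-(ρ + 4*d*ρ)) • evec d i)|
      ≤ |φ (x + (ρ + 4*d*ρ) • evec d i) - φ (x + ρ • evec d i)|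
        + |φ (x + (-ρ) • evec d i) - φ (x + (-(ρ + 4*d*ρ)) • evec d i)| := by
    rw [sub_add]
    exact abs_sub _ _
  nlinarith [h1, h2, h3]

lemma shift_integral (G : EuclideanSpace ℝ (Fin d) → ℝ)
    (v : EuclideanSpace ℝ (Fin d)) (R : ℝ) :
    ∫ x in closedBall (0 : EuclideanSpace ℝ (Fin d)) R, G (x + v)
      = ∫ z in closedBall v R, G z := by
  have hmp : MeasurePreserving (fun x : EuclideanSpace ℝ (Fin d) => x + v)
      volume volume := measurePreserving_add_right volume v
  have hemb : MeasurableEmbedding (fun x : EuclideanSpace ℝ (Fin d) => x + v) :=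
    (MeasurableEquiv.addRight v).measurableEmbedding
  have hpre : (fun x : EuclideanSpace ℝ (Fin d) => x + v) ⁻¹' (closedBall v R)
      = closedBall 0 R := by
    ext z
    simp [mem_closedBall, dist_eq_norm]
  rw [← hpre, hmp.setIntegral_preimage_emb hemb]

lemma integral_Del_le (hlip : LipschitzWith L φ) (hd : 0 < d) {ρ R : ℝ}
    (hρ : 0 < ρ) (hR : 0 < R) (i : Fin d) :
    ∫ x in closedBall (0 : EuclideanSpace ℝ (Fin d)) R, Del φ ρ i x
      ≤ 2*L * ((volume (ball (0:EuclideanSpace ℝ (Fin d)) 1)).toReal)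
        * ((R + (2+4*d)*ρ)^d - R^d) := by
  have hd' : (0:ℝ) < d := by exact_mod_cast hd
  set e := evec d i with he
  set ζ : ℝ := 4*d*ρ with hζ
  have hζ0 : 0 < ζ := by rw [hζ]; positivity
  set τ : ℝ := (2+4*d)*ρ with hτ
  have hτ0 : 0 < τ := by rw [hτ]; positivity
  set V : ℝ := (volume (ball (0:EuclideanSpace ℝ (Fin d)) 1)).toReal with hV
  have hV0 : 0 ≤ V := ENNReal.toReal_nonneg
  set G : EuclideanSpace ℝ (Fin d) → ℝ := fun z => φ (z + ζ•e) - φ z with hG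
  have hGcont : Continuous G :=
    (hlip.continuous.comp (continuous_id.add continuous_const)).sub hlip.continuous
  have hGbd : ∀ z, |G z| ≤ L * ζ := by
    intro z
    have hb := lip_abs hlip (z + ζ•e) z
    rw [add_sub_cancel_left, norm_smul, he, norm_evec, Real.norm_eq_abs,
      abs_of_pos hζ0] at hb
    simpa [hG] using hb
  have hDel : ∀ x, Del φ ρ i x = (G (x + ρ•e) - G (x + (-(ρ+ζ))•e)) / ζ := by
    intro x
    rw [Del, ← he, ← hζ, hG]
    simp only
    have e1 : (x + ρ•e) + ζ•e = x + (ρ+ζ)•e := by rw [add_smul]; abel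
    have e2 : (x + (-(ρ+ζ))•e) + ζ•e = x + (-ρ)•e := by
      have hs : (-ρ : ℝ) = (-(ρ+ζ)) + ζ := by ring
      rw [hs, add_smul]; abel
    rw [e1, e2]
    ring
  -- integrability of shifted G on compact balls
  have hIcomp : ∀ (v : EuclideanSpace ℝ (Fin d)) (c : EuclideanSpace ℝ (Fin d)) (r : ℝ),
      IntegrableOn (fun x => G (x + v)) (closedBall c r) volume := by
    intro v c r
    exact (hGcont.comp (continuous_id.add continuous_const)).continuousOn.integrableOn_compact
      (isCompact_closedBall _ _)
  have hIG : ∀ (c : EuclideanSpace ℝ (Fin d)) (r : ℝ),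
      IntegrableOn G (closedBall c r) volume := by
    intro c r
    exact hGcont.continuousOn.integrableOn_compact (isCompact_closedBall _ _)
  have step1 : ∫ x in closedBall (0 : EuclideanSpace ℝ (Fin d)) R, Del φ ρ i x
      = ((∫ z in closedBall (ρ•e) R, G z) - ∫ z in closedBall ((-(ρ+ζ))•e) R, G z) / ζ := by
    calc ∫ x in closedBall (0 : EuclideanSpace ℝ (Fin d)) R, Del φ ρ i x
        = ∫ x in closedBall (0 : EuclideanSpace ℝ (Fin d)) R,
            (G (x + ρ•e) - G (x + (-(ρ+ζ))•e)) / ζ := by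
          simp only [hDel]
      _ = (∫ x in closedBall (0 : EuclideanSpace ℝ (Fin d)) R,
            (G (x + ρ•e) - G (x + (-(ρ+ζ))•e))) / ζ := by
          rw [integral_div]
      _ = ((∫ x in closedBall (0 : EuclideanSpace ℝ (Fin d)) R, G (x + ρ•e))
          - ∫ x in closedBall (0 : EuclideanSpace ℝ (Fin d)) R, G (x + (-(ρ+ζ))•e)) / ζ := by
          rw [integral_sub (hIcomp _ _ _) (hIcomp _ _ _)]
      _ = ((∫ z in closedBall (ρ•e) R, G z) - ∫ z in closedBall ((-(ρ+ζ))•e) R, G z) / ζ := by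
          rw [shift_integral, shift_integral]
  -- annulus measure computation
  have annulus : ∀ c : EuclideanSpace ℝ (Fin d),
      (volume (closedBall c (R+τ) \ closedBall c R)).toReal = ((R+τ)^d - R^d) * V := by
    intro c
    rw [measure_diff (closedBall_subset_closedBall (by linarith))
      measurableSet_closedBall.nullMeasurableSet measure_closedBall_lt_top.ne]
    rw [Measure.addHaar_closedBall _ _ (by linarith : (0:ℝ) ≤ R + τ),
      Measure.addHaar_closedBall _ _ hR.le, finrank_euclideanSpace_fin]
    rw [ENNReal.toReal_sub_of_le]
    · rw [ENNReal.toReal_mul, ENNReal.toReal_mul,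
        ENNReal.toReal_ofReal (by positivity), ENNReal.toReal_ofReal (by positivity)]
      rw [← hV]
      ring
    · apply mul_le_mul_left
      exact ENNReal.ofReal_le_ofReal (by
        apply pow_le_pow_left₀ hR.le (by linarith))
    · exact ENNReal.mul_ne_top ENNReal.ofReal_ne_top measure_ball_lt_top.ne
  -- bound difference of the two ball integrals
  have hdiffsub : ∀ c c' : EuclideanSpace ℝ (Fin d), dist c c' ≤ τ →
      (volume (closedBall c R \ closedBall c' R)).toReal ≤ ((R+τ)^d - R^d) * V := by
    intro c c' hcc
    have hsub : closedBall c R \ closedBall c' R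
        ⊆ closedBall c' (R+τ) \ closedBall c' R := by
      intro z hz
      refine ⟨?_, hz.2⟩
      rw [mem_closedBall]
      calc dist z c' ≤ dist z c + dist c c' := dist_triangle _ _ _
        _ ≤ R + τ := add_le_add (mem_closedBall.1 hz.1) hcc
    calc (volume (closedBall c R \ closedBall c' R)).toReal
        ≤ (volume (closedBall c' (R+τ) \ closedBall c' R)).toReal := by
          apply ENNReal.toReal_mono
          · exact ((measure_mono diff_subset).trans_lt measure_closedBall_lt_top).ne
          · exact measure_mono hsub
      _ = ((R+τ)^d - R^d) * V := annulus c'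
  have hIdiff : ∀ c c' : EuclideanSpace ℝ (Fin d), dist c c' ≤ τ → dist c' c ≤ τ →
      (∫ z in closedBall c R, G z) - ∫ z in closedBall c' R, G z
        ≤ L*ζ * (2 * (((R+τ)^d - R^d) * V)) := by
    intro c c' h1 h2
    have hsplit : ∀ b b' : EuclideanSpace ℝ (Fin d),
        ∫ z in closedBall b R, G z
          = (∫ z in closedBall b R ∩ closedBall b' R, G z)
            + ∫ z in closedBall b R \ closedBall b' R, G z := by
      intro b b'
      conv_lhs => rw [← inter_union_diff (closedBall b R) (closedBall b' R)]
      exact setIntegral_union (disjoint_sdiff_self_left.symm.mono_left inter_subset_right)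
        (measurableSet_closedBall.diff measurableSet_closedBall)
        ((hIG b R).mono_set inter_subset_left)
        ((hIG b R).mono_set diff_subset)
    have habs : ∀ b b' : EuclideanSpace ℝ (Fin d),
        |∫ z in closedBall b R \ closedBall b' R, G z|
          ≤ L*ζ * (volume (closedBall b R \ closedBall b' R)).toReal := by
      intro b b'
      have := norm_setIntegral_le_of_norm_le_const (μ := volume)
        (s := closedBall b R \ closedBall b' R) (f := G) (C := L*ζ)
        ((measure_mono diff_subset).trans_lt measure_closedBall_lt_top)
        (fun z _ => by rw [Real.norm_eq_abs]; exact hGbd z)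
      rwa [Real.norm_eq_abs, measureReal_def] at this
    have e1 := hsplit c c'
    have e2 := hsplit c' c
    have hinter : closedBall c R ∩ closedBall c' R = closedBall c' R ∩ closedBall c R :=
      inter_comm _ _
    rw [hinter] at e1
    have hb1 := (abs_le.1 (habs c c')).2
    have hb2 := (abs_le.1 (habs c' c)).1
    have hm1 := hdiffsub c c' h1
    have hm2 := hdiffsub c' c h2
    have hLζ : 0 ≤ (L:ℝ)*ζ := by positivity
    have hmul1 : (L:ℝ)*ζ * (volume (closedBall c R \ closedBall c' R)).toReal
        ≤ L*ζ * (((R+τ)^d - R^d) * V) := mul_le_mul_of_nonneg_left hm1 hLζ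
    have hmul2 : (L:ℝ)*ζ * (volume (closedBall c' R \ closedBall c R)).toReal
        ≤ L*ζ * (((R+τ)^d - R^d) * V) := mul_le_mul_of_nonneg_left hm2 hLζ
    nlinarith [e1, e2, hb1, hb2, hmul1, hmul2]
  -- put it together
  have hdist1 : dist (ρ•e) ((-(ρ+ζ))•e) ≤ τ := by
    rw [dist_eq_norm]
    have hee : ρ•e - (-(ρ+ζ))•e = (2*ρ+ζ)•e := by
      have hs : (2*ρ+ζ : ℝ) = ρ - (-(ρ+ζ)) := by ring
      rw [hs, sub_smul]
    rw [hee, norm_smul, he, norm_evec, Real.norm_eq_abs, abs_of_pos (by positivity)]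
    rw [hτ, hζ]
    nlinarith
  have hdist2 : dist ((-(ρ+ζ))•e) (ρ•e) ≤ τ := by rw [dist_comm]; exact hdist1
  rw [step1, div_le_iff₀ hζ0]
  have := hIdiff (ρ•e) ((-(ρ+ζ))•e) hdist1 hdist2
  calc (∫ z in closedBall (ρ•e) R, G z) - ∫ z in closedBall ((-(ρ+ζ))•e) R, G z
      ≤ L*ζ * (2 * (((R+τ)^d - R^d) * V)) := this
    _ = 2*L*V*((R + τ)^d - R^d) * ζ := by ring

lemma pow_sub_pow_le {a b : ℝ} (hb : 0 ≤ b) (hba : b ≤ a) (n : ℕ) :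
    a^n - b^n ≤ n * (a - b) * a^(n-1) := by
  have ha : 0 ≤ a := hb.trans hba
  have hid := geom_sum₂_mul a b n
  rw [← hid]
  have hterm : ∀ i ∈ Finset.range n, a ^ i * b ^ (n - 1 - i) ≤ a^(n-1) := by
    intro i hi
    have hin : i ≤ n - 1 := Nat.le_pred_of_lt (Finset.mem_range.1 hi)
    calc a ^ i * b ^ (n - 1 - i) ≤ a ^ i * a ^ (n - 1 - i) := by
          apply mul_le_mul_of_nonneg_left (pow_le_pow_left₀ hb hba _) (pow_nonneg ha _)
      _ = a ^ (n - 1) := by rw [← pow_add, Nat.add_sub_cancel' hin]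
  calc (∑ i ∈ Finset.range n, a ^ i * b ^ (n - 1 - i)) * (a - b)
      ≤ (n * a^(n-1)) * (a - b) := by
        apply mul_le_mul_of_nonneg_right _ (by linarith)
        calc (∑ i ∈ Finset.range n, a ^ i * b ^ (n - 1 - i))
            ≤ ∑ _i ∈ Finset.range n, a^(n-1) := Finset.sum_le_sum hterm
          _ = n * a^(n-1) := by
            rw [Finset.sum_const, Finset.card_range, nsmul_eq_mul]
    _ = n * (a - b) * a^(n-1) := by ring

lemma d_mul_le (d : ℕ) (hd : 0 < d) : (d:ℝ) * (3/2)^(d-1) ≤ 8^d := by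
  induction d with
  | zero => simp
  | succ n ih =>
    rcases Nat.eq_zero_or_pos n with hn | hn
    · subst hn; norm_num
    · have h1 := ih hn
      have hcast : (1:ℝ) ≤ n := by exact_mod_cast hn
      have hsucc : (n+1 : ℕ) - 1 = (n - 1) + 1 := by omega
      rw [hsucc, pow_succ, pow_succ]
      push_cast
      nlinarith [pow_nonneg (by norm_num : (0:ℝ) ≤ 3/2) (n-1),
        pow_nonneg (by norm_num : (0:ℝ) ≤ 8) n]

lemma bern {σ : ℝ} (hσ : 0 ≤ σ) : ∀ k : ℕ, k * σ ≤ 1/2 → (1+σ)^k ≤ 1 + 2*k*σ := by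
  intro k
  induction k with
  | zero => intro _; norm_num
  | succ n ih =>
    intro hk
    have hn : (n:ℝ) * σ ≤ 1/2 := by
      have : (n:ℝ) ≤ (n:ℝ)+1 := by linarith
      calc (n:ℝ)*σ ≤ ((n:ℝ)+1)*σ := by nlinarith
        _ ≤ 1/2 := by push_cast at hk ⊢; linarith
    have h1 := ih hn
    rw [pow_succ]
    push_cast
    nlinarith [pow_nonneg (by linarith : (0:ℝ) ≤ 1+σ) n]

lemma rpow_le_aux {D c q : ℝ} (hD : 0 ≤ D) (hDc : D ≤ c) (hq : 1 < q) :
    D ^ q ≤ c ^ (q-1) * D := by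
  rcases eq_or_lt_of_le hD with h0 | h0
  · rw [← h0, Real.zero_rpow (by linarith)]
    simp
  · have hc : 0 < c := lt_of_lt_of_le h0 hDc
    have hsplit : D ^ q = D ^ (q-1) * D := by
      rw [show q = (q-1)+1 by ring, Real.rpow_add h0, Real.rpow_one]
      ring_nf
    rw [hsplit]
    apply mul_le_mul_of_nonneg_right _ hD
    exact Real.rpow_le_rpow hD hDc (by linarith)

end Statement5

set_option maxHeartbeats 2000000 in
open Statement5 in
/-- integral bound on near-singularities of a convex Lipschitz function:
for `η, R > 0`, `q > 1`,
`∫_{B(0,R)} diam(∂φ(B(x,η)))^q dx ≤ 48 d² β_d 2^(3d+q-1) (q/(q-1)) (R+4η)^(d-1) Lip(φ)^q η`. -/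
theorem integral_diam_subdiff_le (d : ℕ) (L : NNReal) (φ : EuclideanSpace ℝ (Fin d) → ℝ)
    (hconv : ConvexOn ℝ Set.univ φ) (hlip : LipschitzWith L φ)
    (η R q : ℝ) (hη : 0 < η) (hR : 0 < R) (hq : 1 < q) :
    ∫ x in closedBall (0 : EuclideanSpace ℝ (Fin d)) R,
        Metric.diam (subdiffSet φ (closedBall x η)) ^ q ≤
      48 * (d : ℝ) ^ 2 * (volume (ball (0 : EuclideanSpace ℝ (Fin d)) 1)).toReal *
        2 ^ (3 * (d : ℝ) + q - 1) * (q / (q - 1)) * (R + 4 * η) ^ (d - 1) *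
        (L : ℝ) ^ q * η := by
  have hq1 : 0 < q - 1 := by linarith
  have hq0 : 0 < q := by linarith
  have hqq : 1 ≤ q / (q-1) := by rw [le_div_iff₀ hq1]; linarith
  have hfrac0 : 0 ≤ q / (q-1) := le_trans zero_le_one hqq
  set V : ℝ := (volume (ball (0 : EuclideanSpace ℝ (Fin d)) 1)).toReal with hV
  have hV0 : 0 ≤ V := ENNReal.toReal_nonneg
  have h2pos : (0:ℝ) ≤ 2 ^ (3 * (d : ℝ) + q - 1) := Real.rpow_nonneg (by norm_num) _
  have hLq0 : (0:ℝ) ≤ (L : ℝ) ^ q := Real.rpow_nonneg L.coe_nonneg _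
  have hRη0 : (0:ℝ) ≤ (R + 4 * η) ^ (d - 1) := by positivity
  have hRHS0 : 0 ≤ 48 * (d : ℝ) ^ 2 * V * 2 ^ (3 * (d : ℝ) + q - 1) * (q / (q - 1)) *
      (R + 4 * η) ^ (d - 1) * (L : ℝ) ^ q * η := by
    have h48 : (0:ℝ) ≤ 48 * (d : ℝ) ^ 2 * V := by positivity
    exact mul_nonneg (mul_nonneg (mul_nonneg (mul_nonneg (mul_nonneg h48 h2pos) hfrac0)
      hRη0) hLq0) hη.le
  by_cases hL0 : (L:ℝ) = 0
  · have hzero : ∀ x : EuclideanSpace ℝ (Fin d),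
        diam (subdiffSet φ (closedBall x η)) ^ q = 0 := by
      intro x
      have h1 := diam_subdiffSet_le hlip (closedBall x η)
      rw [hL0] at h1
      have h2 : diam (subdiffSet φ (closedBall x η)) = 0 :=
        le_antisymm (by linarith) diam_nonneg
      rw [h2, Real.zero_rpow (by linarith)]
    have hz : (∫ x in closedBall (0 : EuclideanSpace ℝ (Fin d)) R,
        diam (subdiffSet φ (closedBall x η)) ^ q) = 0 := by
      simp only [hzero]
      simp
    rw [hz]
    exact hRHS0
  have hL : 0 < (L:ℝ) := lt_of_le_of_ne L.coe_nonneg (Ne.symm hL0)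
  by_cases hd0 : d = 0
  · subst hd0
    have hzero : ∀ x : EuclideanSpace ℝ (Fin 0),
        diam (subdiffSet φ (closedBall x η)) ^ q = 0 := by
      intro x
      have h2 : diam (subdiffSet φ (closedBall x η)) = 0 := by
        apply Metric.diam_subsingleton
        apply Set.subsingleton_of_subsingleton
      rw [h2, Real.zero_rpow (by linarith)]
    have hz : (∫ x in closedBall (0 : EuclideanSpace ℝ (Fin 0)) R,
        diam (subdiffSet φ (closedBall x η)) ^ q) = 0 := by
      simp only [hzero]
      simp
    rw [hz]
    exact hRHS0
  have hd : 0 < d := Nat.pos_of_ne_zero hd0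
  have hd' : (0:ℝ) < d := by exact_mod_cast hd
  have hd1 : (1:ℝ) ≤ d := by exact_mod_cast hd
  by_cases hInt : IntegrableOn
      (fun x => diam (subdiffSet φ (closedBall x η)) ^ q)
      (closedBall (0:EuclideanSpace ℝ (Fin d)) R) volume
  swap
  · rw [integral_undef hInt]
    exact hRHS0
  have hvolR : (volume (closedBall (0:EuclideanSpace ℝ (Fin d)) R)).toReal = R^d * V := by
    rw [Measure.addHaar_closedBall _ _ hR.le, finrank_euclideanSpace_fin,
      ENNReal.toReal_mul, ENNReal.toReal_ofReal (by positivity)]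
  have h2split : (2:ℝ) ^ (3*(d:ℝ) + q - 1) = 8^d * 2^(q-1) := by
    rw [show 3*(d:ℝ)+q-1 = 3*(d:ℝ) + (q-1) by ring,
      Real.rpow_add (by norm_num : (0:ℝ)<2)]
    congr 1
    rw [show (3:ℝ)*(d:ℝ) = ((3*d : ℕ) : ℝ) by push_cast; ring, Real.rpow_natCast,
      pow_mul]
    norm_num
  by_cases hcase : R ≤ 24*d*η
  · -- trivial branch
    have hb : ∀ x ∈ closedBall (0:EuclideanSpace ℝ (Fin d)) R,
        diam (subdiffSet φ (closedBall x η)) ^ q ≤ (2*(L:ℝ))^q := fun x _ =>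
      Real.rpow_le_rpow diam_nonneg (diam_subdiffSet_le hlip _) hq0.le
    have hIc : IntegrableOn (fun _ : EuclideanSpace ℝ (Fin d) => (2*(L:ℝ))^q)
        (closedBall 0 R) volume := by
      apply integrableOn_const measure_closedBall_lt_top.ne
    have h1 := setIntegral_mono_on hInt hIc measurableSet_closedBall hb
    rw [setIntegral_const, smul_eq_mul, measureReal_def, hvolR] at h1
    have h2q : (2:ℝ)^(q-1)*2 = 2^q := by
      rw [← Real.rpow_add_one (by norm_num : (2:ℝ) ≠ 0) (q-1)]
      congr 1
      ring
    have hexp : (2*(L:ℝ))^q = 2^(q-1)*2*(L:ℝ)^q := by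
      rw [Real.mul_rpow (by norm_num) L.coe_nonneg, h2q]
    have keyT : 2*R^d ≤ 48*(d:ℝ)^2*8^d*(q/(q-1))*((R+4*η)^(d-1))*η := by
      have hRd : R^d = R^(d-1)*R := by
        conv_lhs => rw [show d = (d-1)+1 from (Nat.succ_pred_eq_of_pos hd).symm]
        rw [pow_succ]
      have hp1 : R^(d-1) ≤ (R+4*η)^(d-1) := pow_le_pow_left₀ hR.le (by linarith) _
      have h8 : (1:ℝ) ≤ 8^d := one_le_pow₀ (by norm_num)
      calc 2*R^d = 2*(R^(d-1)*R) := by rw [← hRd]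
        _ ≤ 2*((R+4*η)^(d-1)*(24*d*η)) := by
            apply mul_le_mul_of_nonneg_left _ (by norm_num)
            apply mul_le_mul hp1 hcase hR.le (by positivity)
        _ = 48*(d:ℝ)*((R+4*η)^(d-1)*η) := by ring
        _ ≤ 48*(d:ℝ)^2*8^d*(q/(q-1))*((R+4*η)^(d-1))*η := by
            have base : (48:ℝ)*d ≤ 48*d^2*8^d*(q/(q-1)) := by
              calc (48:ℝ)*d ≤ 48*d^2 := by nlinarith [hd1]
                _ = 48*d^2*1*1 := by ring
                _ ≤ 48*d^2*8^d*(q/(q-1)) := by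
                    apply mul_le_mul _ hqq zero_le_one (by positivity)
                    apply mul_le_mul le_rfl h8 zero_le_one (by positivity)
            have hmul := mul_le_mul_of_nonneg_right base (mul_nonneg hRη0 hη.le)
            nlinarith [hmul]
    have hP0 : 0 ≤ V*2^(q-1)*(L:ℝ)^q :=
      mul_nonneg (mul_nonneg hV0 (Real.rpow_nonneg (by norm_num) _)) hLq0
    calc ∫ x in closedBall (0 : EuclideanSpace ℝ (Fin d)) R,
          diam (subdiffSet φ (closedBall x η)) ^ q
        ≤ R^d * V * (2*(L:ℝ))^q := h1
      _ = (2*R^d) * (V*2^(q-1)*(L:ℝ)^q) := by rw [hexp]; ring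
      _ ≤ (48*(d:ℝ)^2*8^d*(q/(q-1))*((R+4*η)^(d-1))*η) * (V*2^(q-1)*(L:ℝ)^q) :=
          mul_le_mul_of_nonneg_right keyT hP0
      _ = 48 * (d : ℝ) ^ 2 * V * 2 ^ (3 * (d : ℝ) + q - 1) * (q / (q - 1)) *
          (R + 4 * η) ^ (d - 1) * (L : ℝ) ^ q * η := by
          rw [h2split]
          ring
  · -- main branch
    push_neg at hcase
    have hηR : η < R := by nlinarith [hd1, hη]
    set W : ℝ := 24*(d:ℝ)^2*(L:ℝ)*V*η*(3/2)^(d-1)*(R+4*η)^(d-1) with hWdef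
    have hW0 : 0 ≤ W := by
      rw [hWdef]
      have : (0:ℝ) ≤ (3/2:ℝ)^(d-1) := by positivity
      positivity
    have hDelInt : ∀ ρ : ℝ, 0 < ρ → ρ ≤ 2*η → ∀ i : Fin d,
        (∫ x in closedBall (0:EuclideanSpace ℝ (Fin d)) R, Del φ ρ i x) ≤ W := by
      intro ρ hρ0 hρ2 i
      have h1 := integral_Del_le hlip hd hρ0 hR i
      have hτle : (2+4*(d:ℝ))*ρ ≤ 12*(d:ℝ)*η := by nlinarith [hd1, hρ2, hη, hρ0]
      have hτ0 : (0:ℝ) < (2+4*(d:ℝ))*ρ := by positivity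
      have hRτ : R + (2+4*(d:ℝ))*ρ ≤ (3/2)*(R+4*η) := by nlinarith [hcase]
      have hpow := pow_sub_pow_le hR.le
        (by linarith : R ≤ R + (2+4*(d:ℝ))*ρ) d
      have hps : (R + (2+4*(d:ℝ))*ρ)^(d-1) ≤ (3/2)^(d-1)*(R+4*η)^(d-1) := by
        calc (R + (2+4*(d:ℝ))*ρ)^(d-1) ≤ ((3/2)*(R+4*η))^(d-1) :=
              pow_le_pow_left₀ (by positivity) hRτ _
          _ = (3/2)^(d-1)*(R+4*η)^(d-1) := mul_pow _ _ _
      have hmid : (R + (2+4*(d:ℝ))*ρ)^d - R^d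
          ≤ (d:ℝ) * (12*(d:ℝ)*η) * ((3/2)^(d-1)*(R+4*η)^(d-1)) := by
        have h2 : (R + (2+4*(d:ℝ))*ρ) - R = (2+4*(d:ℝ))*ρ := by ring
        rw [h2] at hpow
        calc (R + (2+4*(d:ℝ))*ρ)^d - R^d
            ≤ (d:ℝ) * ((2+4*(d:ℝ))*ρ) * (R + (2+4*(d:ℝ))*ρ)^(d-1) := hpow
          _ ≤ (d:ℝ) * (12*(d:ℝ)*η) * ((3/2)^(d-1)*(R+4*η)^(d-1)) := by
              apply mul_le_mul
              · exact mul_le_mul_of_nonneg_left hτle (by positivity)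
              · exact hps
              · positivity
              · positivity
      calc (∫ x in closedBall (0:EuclideanSpace ℝ (Fin d)) R, Del φ ρ i x)
          ≤ 2*(L:ℝ)*V*((R + (2+4*(d:ℝ))*ρ)^d - R^d) := h1
        _ ≤ 2*(L:ℝ)*V*((d:ℝ) * (12*(d:ℝ)*η) * ((3/2)^(d-1)*(R+4*η)^(d-1))) := by
            apply mul_le_mul_of_nonneg_left hmid (by positivity)
        _ = W := by rw [hWdef]; ring
    -- fixed-K estimate
    have hKb : ∀ K : ℕ,
        (∫ x in closedBall (0:EuclideanSpace ℝ (Fin d)) R,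
          diam (subdiffSet φ (closedBall x η)) ^ q)
        ≤ (2*(L:ℝ))^(q-1) * (2*((d:ℝ)*W)
            + 2*(η/(2*R*((K:ℝ)+1)))*(L:ℝ)*(R^d*V)
            + (1/2:ℝ)^K*(2*(L:ℝ))*(R^d*V)) := by
      intro K
      set σ : ℝ := η/(2*R*((K:ℝ)+1)) with hσdef
      have hK1 : (0:ℝ) < (K:ℝ)+1 := by positivity
      have hσ0 : 0 < σ := by rw [hσdef]; positivity
      have hσ1 : σ ≤ 1 := by
        rw [hσdef, div_le_one (by positivity)]
        nlinarith [Nat.cast_nonneg (α := ℝ) K, hηR, hR]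
      have hρk : ∀ k : ℕ, k ≤ K → η*(1+σ)^k ≤ 2*η := by
        intro k hk
        have hkK : (k:ℝ) ≤ (K:ℝ)+1 := by
          have : (k:ℝ) ≤ (K:ℝ) := by exact_mod_cast hk
          linarith
        have hkσ : (k:ℝ)*σ ≤ 1/2 := by
          have he : (k:ℝ)*σ = ((k:ℝ)*η)/(2*R*((K:ℝ)+1)) := by rw [hσdef]; ring
          rw [he, div_le_iff₀ (by positivity)]
          nlinarith [Nat.cast_nonneg (α := ℝ) k, hηR.le, hη.le]
        have hb := bern hσ0.le k hkσ
        nlinarith [hη, pow_nonneg (by linarith : (0:ℝ) ≤ 1+σ) k]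
      have hrpnn : (0:ℝ) ≤ (2*(L:ℝ))^(q-1) := Real.rpow_nonneg (by positivity) _
      have hmaj : ∀ x : EuclideanSpace ℝ (Fin d),
          diam (subdiffSet φ (closedBall x η)) ^ q
          ≤ (2*(L:ℝ))^(q-1) * ((∑ k ∈ Finset.range K,
              (1/2:ℝ)^k * ((∑ i : Fin d, Del φ (η*(1+σ)^k) i x) + σ*L))
            + (1/2:ℝ)^K * (2*L)) := by
        intro x
        have h1 := unroll hconv hlip hL hd x hσ0 hσ1 K η hη
        have h2 := rpow_le_aux diam_nonneg (diam_subdiffSet_le hlip (closedBall x η)) hq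
        calc diam (subdiffSet φ (closedBall x η)) ^ q
            ≤ (2*(L:ℝ))^(q-1) * diam (subdiffSet φ (closedBall x η)) := h2
          _ ≤ _ := mul_le_mul_of_nonneg_left h1 hrpnn
      set Maj : EuclideanSpace ℝ (Fin d) → ℝ := fun x =>
        (∑ k ∈ Finset.range K,
          (1/2:ℝ)^k * ((∑ i : Fin d, Del φ (η*(1+σ)^k) i x) + σ*L))
        + (1/2:ℝ)^K * (2*L) with hMajdef
      have hMajCont : Continuous Maj := by
        rw [hMajdef]
        apply Continuous.add _ continuous_const
        apply continuous_finset_sum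
        intro k _
        apply Continuous.mul continuous_const
        apply Continuous.add _ continuous_const
        exact continuous_finset_sum _ (fun i _ => Del_continuous hlip _ i)
      have hMajInt : IntegrableOn (fun x => (2*(L:ℝ))^(q-1) * Maj x)
          (closedBall (0:EuclideanSpace ℝ (Fin d)) R) volume :=
        (continuous_const.mul hMajCont).continuousOn.integrableOn_compact
          (isCompact_closedBall _ _)
      have hstep := setIntegral_mono_on hInt hMajInt measurableSet_closedBall
        (fun x _ => hmaj x)
      rw [integral_const_mul] at hstep
      -- compute ∫ Maj
      have hSumCont : ∀ k : ℕ, Continuous (fun x : EuclideanSpace ℝ (Fin d) =>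
          ∑ i : Fin d, Del φ (η*(1+σ)^k) i x) := fun k =>
        continuous_finset_sum _ (fun i _ => Del_continuous hlip _ i)
      have hint_eq : (∫ x in closedBall (0:EuclideanSpace ℝ (Fin d)) R, Maj x)
          = (∑ k ∈ Finset.range K, (1/2:ℝ)^k *
              ((∑ i : Fin d, ∫ x in closedBall (0:EuclideanSpace ℝ (Fin d)) R,
                Del φ (η*(1+σ)^k) i x) + σ*(L:ℝ)*(R^d*V)))
            + (1/2:ℝ)^K * (2*(L:ℝ)) * (R^d*V) := by
        have hIsum : IntegrableOn (fun x => ∑ k ∈ Finset.range K,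
            (1/2:ℝ)^k * ((∑ i : Fin d, Del φ (η*(1+σ)^k) i x) + σ*(L:ℝ)))
            (closedBall (0:EuclideanSpace ℝ (Fin d)) R) volume :=
          (continuous_finset_sum _ (fun k _ =>
            (continuous_const.mul ((hSumCont k).add continuous_const)))).continuousOn.integrableOn_compact
            (isCompact_closedBall _ _)
        have hIconst : IntegrableOn (fun _ : EuclideanSpace ℝ (Fin d) =>
            (1/2:ℝ)^K * (2*(L:ℝ))) (closedBall (0:EuclideanSpace ℝ (Fin d)) R) volume :=
          integrableOn_const measure_closedBall_lt_top.ne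
        rw [hMajdef]
        rw [integral_add hIsum hIconst]
        congr 1
        · rw [integral_finset_sum _ (f := fun k x => (1/2:ℝ)^k *
              ((∑ i : Fin d, Del φ (η*(1+σ)^k) i x) + σ*(L:ℝ))) (fun k _ =>
            ((continuous_const.mul ((hSumCont k).add continuous_const)).continuousOn.integrableOn_compact
              (isCompact_closedBall _ _)))]
          apply Finset.sum_congr rfl
          intro k _
          rw [integral_const_mul]
          congr 1
          rw [integral_add
            ((hSumCont k).continuousOn.integrableOn_compact (isCompact_closedBall _ _))
            (integrableOn_const measure_closedBall_lt_top.ne)]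
          rw [integral_finset_sum _ (fun i _ =>
            ((Del_continuous hlip _ i).continuousOn.integrableOn_compact
              (isCompact_closedBall _ _)))]
          rw [setIntegral_const, smul_eq_mul, measureReal_def, hvolR]
          ring
        · rw [setIntegral_const, smul_eq_mul, measureReal_def, hvolR]
          ring
      have hvol0 : (0:ℝ) ≤ R^d*V := mul_nonneg (pow_nonneg hR.le d) hV0
      have hdW : ∀ k ∈ Finset.range K,
          (∑ i : Fin d, ∫ x in closedBall (0:EuclideanSpace ℝ (Fin d)) R,
            Del φ (η*(1+σ)^k) i x) ≤ (d:ℝ)*W := by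
        intro k hk
        calc (∑ i : Fin d, ∫ x in closedBall (0:EuclideanSpace ℝ (Fin d)) R,
              Del φ (η*(1+σ)^k) i x)
            ≤ ∑ _i : Fin d, W := Finset.sum_le_sum (fun i _ =>
              hDelInt _ (by positivity) (hρk k (Nat.lt_succ_iff.1
                (Nat.lt_succ_of_lt (Finset.mem_range.1 hk)))) i)
          _ = (d:ℝ)*W := by
              rw [Finset.sum_const, Finset.card_univ, Fintype.card_fin, nsmul_eq_mul]
      have hterm : ∀ k ∈ Finset.range K,
          (1/2:ℝ)^k * ((∑ i : Fin d, ∫ x in closedBall (0:EuclideanSpace ℝ (Fin d)) R,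
            Del φ (η*(1+σ)^k) i x) + σ*(L:ℝ)*(R^d*V))
          ≤ (1/2:ℝ)^k * ((d:ℝ)*W + σ*(L:ℝ)*(R^d*V)) := fun k hk =>
        mul_le_mul_of_nonneg_left (add_le_add (hdW k hk) le_rfl) (by positivity)
      have hgeom : (∑ k ∈ Finset.range K, (1/2:ℝ)^k) ≤ 2 := by
        rw [geom_sum_eq (by norm_num : (1/2:ℝ) ≠ 1) K]
        have h0 : (0:ℝ) ≤ (1/2:ℝ)^K := by positivity
        rw [div_le_iff_of_neg (by norm_num : (1/2:ℝ)-1 < 0)]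
        nlinarith
      have hWσ0 : 0 ≤ (d:ℝ)*W + σ*(L:ℝ)*(R^d*V) :=
        add_nonneg (mul_nonneg hd'.le hW0)
          (mul_nonneg (mul_nonneg hσ0.le hL.le) hvol0)
      have hsum2 : (∑ k ∈ Finset.range K, (1/2:ℝ)^k * ((d:ℝ)*W + σ*(L:ℝ)*(R^d*V)))
          ≤ 2*((d:ℝ)*W + σ*(L:ℝ)*(R^d*V)) := by
        rw [← Finset.sum_mul]
        exact mul_le_mul_of_nonneg_right hgeom hWσ0
      calc (∫ x in closedBall (0:EuclideanSpace ℝ (Fin d)) R,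
            diam (subdiffSet φ (closedBall x η)) ^ q)
          ≤ (2*(L:ℝ))^(q-1) *
            (∫ x in closedBall (0:EuclideanSpace ℝ (Fin d)) R, Maj x) := hstep
        _ ≤ (2*(L:ℝ))^(q-1) * (2*((d:ℝ)*W + σ*(L:ℝ)*(R^d*V))
              + (1/2:ℝ)^K * (2*(L:ℝ)) * (R^d*V)) := by
            apply mul_le_mul_of_nonneg_left _ hrpnn
            rw [hint_eq]
            have h6 := le_trans (Finset.sum_le_sum hterm) hsum2
            linarith
        _ = (2*(L:ℝ))^(q-1) * (2*((d:ℝ)*W) + 2*σ*(L:ℝ)*(R^d*V)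
              + (1/2:ℝ)^K*(2*(L:ℝ))*(R^d*V)) := by ring
    -- limit K → ∞
    have h1 : Tendsto (fun K : ℕ => 2*(η/(2*R*((K:ℝ)+1)))*(L:ℝ)*(R^d*V)) atTop
        (nhds 0) := by
      have h2 := tendsto_one_div_add_atTop_nhds_zero_nat.const_mul
        (2*(η/(2*R))*(L:ℝ)*(R^d*V))
      have heq : (fun K : ℕ => 2*(η/(2*R*((K:ℝ)+1)))*(L:ℝ)*(R^d*V))
          = (fun K : ℕ => (2*(η/(2*R))*(L:ℝ)*(R^d*V)) * (1/((K:ℝ)+1))) := by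
        funext K
        have hK1 : ((K:ℝ)+1) ≠ 0 := by positivity
        field_simp
      rw [heq]
      simpa using h2
    have h2 : Tendsto (fun K : ℕ => (1/2:ℝ)^K*(2*(L:ℝ))*(R^d*V)) atTop (nhds 0) := by
      have hb := tendsto_pow_atTop_nhds_zero_of_lt_one
        (by norm_num : (0:ℝ) ≤ 1/2) (by norm_num : (1/2:ℝ) < 1)
      have h3 := hb.mul_const ((2*(L:ℝ))*(R^d*V))
      have heq : (fun K : ℕ => (1/2:ℝ)^K*(2*(L:ℝ))*(R^d*V))
          = fun K : ℕ => (1/2:ℝ)^K*((2*(L:ℝ))*(R^d*V)) := by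
        funext K; ring
      rw [heq]
      simpa using h3
    have h4 := ((tendsto_const_nhds :
        Tendsto (fun _ : ℕ => 2*((d:ℝ)*W)) atTop (nhds (2*((d:ℝ)*W)))).add h1).add h2
    have h5 := h4.const_mul ((2*(L:ℝ))^(q-1))
    have hlim : Tendsto (fun K : ℕ => (2*(L:ℝ))^(q-1) * (2*((d:ℝ)*W)
        + 2*(η/(2*R*((K:ℝ)+1)))*(L:ℝ)*(R^d*V)
        + (1/2:ℝ)^K*(2*(L:ℝ))*(R^d*V))) atTop
        (nhds ((2*(L:ℝ))^(q-1) * (2*((d:ℝ)*W)))) := by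
      simpa using h5
    have hle := ge_of_tendsto' hlim hKb
    -- final arithmetic
    have hmulrpow : (2*(L:ℝ))^(q-1) = 2^(q-1)*(L:ℝ)^(q-1) :=
      Real.mul_rpow (by norm_num) L.coe_nonneg
    have hLq : (L:ℝ)^(q-1)*(L:ℝ) = (L:ℝ)^q := by
      rw [← Real.rpow_add_one (ne_of_gt hL) (q-1)]
      congr 1
      ring
    have hkey : (d:ℝ)^3*(3/2)^(d-1) ≤ (d:ℝ)^2*8^d*(q/(q-1)) := by
      have hk1 := d_mul_le d hd
      calc (d:ℝ)^3*(3/2)^(d-1) = (d:ℝ)^2*((d:ℝ)*(3/2)^(d-1)) := by ring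
        _ ≤ (d:ℝ)^2*8^d := mul_le_mul_of_nonneg_left hk1 (by positivity)
        _ = (d:ℝ)^2*8^d*1 := by ring
        _ ≤ (d:ℝ)^2*8^d*(q/(q-1)) := mul_le_mul_of_nonneg_left hqq (by positivity)
    have hP0 : 0 ≤ 2^(q-1)*(L:ℝ)^q*V*η*(R+4*η)^(d-1) := by
      apply mul_nonneg
      apply mul_nonneg
      apply mul_nonneg
      apply mul_nonneg
      · exact Real.rpow_nonneg (by norm_num) _
      · exact hLq0
      · exact hV0
      · exact hη.le
      · exact hRη0
    have hfinal : (2*(L:ℝ))^(q-1) * (2*((d:ℝ)*W))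
        ≤ 48 * (d : ℝ) ^ 2 * V * 2 ^ (3 * (d : ℝ) + q - 1) * (q / (q - 1)) *
          (R + 4 * η) ^ (d - 1) * (L : ℝ) ^ q * η := by
      have hA : (2*(L:ℝ))^(q-1) * (2*((d:ℝ)*W))
          = 48*((d:ℝ)^3*(3/2)^(d-1)) * (2^(q-1)*((L:ℝ)^(q-1)*(L:ℝ))*V*η*(R+4*η)^(d-1)) := by
        rw [hWdef, hmulrpow]
        ring
      have hB : 48 * (d : ℝ) ^ 2 * V * 2 ^ (3 * (d : ℝ) + q - 1) * (q / (q - 1)) *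
          (R + 4 * η) ^ (d - 1) * (L : ℝ) ^ q * η
          = 48*((d:ℝ)^2*8^d*(q/(q-1))) * (2^(q-1)*(L:ℝ)^q*V*η*(R+4*η)^(d-1)) := by
        rw [h2split]
        ring
      rw [hA, hLq, hB]
      apply mul_le_mul_of_nonneg_right _ hP0
      apply mul_le_mul_of_nonneg_left hkey (by norm_num)
    exact le_trans hle hfinal
end

section
/- Let φ : ℝ^d → ℝ be a convex function (hence locally Lipschitz and differentiable Lebesgue-almost everywhere). Then for every x ∈ ℝ^d and η > 0, diam(∂φ(B(x,η))) ≤ (12/(β_d η^d)) · ∫_{B(x,4η)} ‖∇φ(u)‖ du, where β_d is the Lebesgue volume of the unit ball of ℝ^d and the integral of the a.e.-defined gradient is with respect to Lebesgue measure. -/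
open Metric Set MeasureTheory

/-- At a differentiability point of a convex function, the gradient is a subgradient. -/
theorem gradient_mem_subdiff_aux {d : ℕ} {φ : EuclideanSpace ℝ (Fin d) → ℝ}
    (hφ : ConvexOn ℝ Set.univ φ) {u : EuclideanSpace ℝ (Fin d)}
    (hd : DifferentiableAt ℝ φ u) (y : EuclideanSpace ℝ (Fin d)) :
    φ u + (inner ℝ (gradient φ u) (y - u) : ℝ) ≤ φ y := by
  set w := y - u with hw
  set G := gradient φ u with hG
  -- the affine path t ↦ u + t • w
  set L : ℝ → EuclideanSpace ℝ (Fin d) := fun t => u + t • w with hL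
  have hF : HasFDerivAt φ ((InnerProductSpace.toDual ℝ _) G) u := by
    have := hd.hasGradientAt
    rwa [hasGradientAt_iff_hasFDerivAt] at this
  have hLd : HasDerivAt L w 0 := by
    have h1 : HasDerivAt (fun t : ℝ => t • w) ((1 : ℝ) • w) 0 :=
      (hasDerivAt_id (0 : ℝ)).smul_const w
    simpa [hL] using h1.const_add u
  have hL0 : L 0 = u := by simp [hL]
  have hcomp : HasDerivAt (φ ∘ L) ((InnerProductSpace.toDual ℝ _) G w) 0 := by
    refine HasFDerivAt.comp_hasDerivAt 0 ?_ hLd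
    rwa [hL0]
  have hslope : ∀ t ∈ Set.Ioc (0 : ℝ) 1, slope (φ ∘ L) 0 t ≤ φ y - φ u := by
    intro t ht
    have hcvx := hφ.2 (Set.mem_univ u) (Set.mem_univ y) (by linarith [ht.2] : (0:ℝ) ≤ 1 - t)
      ht.1.le (by ring)
    have hcomb : (1 - t) • u + t • y = u + t • w := by
      rw [hw]; module
    rw [hcomb] at hcvx
    have ht0 : (0:ℝ) < t := ht.1
    rw [slope_def_field, sub_zero, div_le_iff₀ ht0]
    have hL0' : (φ ∘ L) 0 = φ u := by rw [Function.comp_apply, hL0]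
    have hLt : (φ ∘ L) t ≤ φ u + t * (φ y - φ u) := by
      calc (φ ∘ L) t = φ (u + t • w) := rfl
        _ ≤ (1 - t) • φ u + t • φ y := hcvx
        _ = φ u + t * (φ y - φ u) := by simp only [smul_eq_mul]; ring
    rw [hL0']
    linarith
  have htend : Filter.Tendsto (slope (φ ∘ L) 0) (nhdsWithin 0 (Set.Ioi 0))
      (nhds ((InnerProductSpace.toDual ℝ _) G w)) := by
    have := hasDerivAt_iff_tendsto_slope.mp hcomp
    exact this.mono_left (nhdsWithin_mono 0 fun t ht => ne_of_gt ht)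
  have hle : (InnerProductSpace.toDual ℝ _) G w ≤ φ y - φ u := by
    refine le_of_tendsto htend ?_
    filter_upwards [Ioc_mem_nhdsGT_of_mem (Set.mem_Ico.mpr ⟨le_refl 0, zero_lt_one⟩)] with t ht
    exact hslope t ht
  have : (inner ℝ G w : ℝ) = (InnerProductSpace.toDual ℝ _) G w := rfl
  rw [this]; linarith

set_option maxHeartbeats 1000000 in
/-- Key bound: the norm of a subgradient at a point of `closedBall x η` is bounded. -/
theorem norm_subgrad_le_aux {d : ℕ} {φ : EuclideanSpace ℝ (Fin d) → ℝ}
    (hφ : ConvexOn ℝ Set.univ φ) {x y g : EuclideanSpace ℝ (Fin d)} {η : ℝ} (hη : 0 < η)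
    (hy : y ∈ closedBall x η) (hg : g ∈ subdiff φ y) :
    ‖g‖ * (volume (closedBall x η)).toReal ≤
      5 * ∫ u in closedBall x (4 * η), ‖gradient φ u‖ := by
  classical
  -- continuity and local Lipschitz property
  have hcont : Continuous φ := by
    rw [← continuousOn_univ]
    exact hφ.continuousOn isOpen_univ
  have hb : ConvexOn ℝ (ball x (6 * η)) φ := hφ.subset (Set.subset_univ _) (convex_ball _ _)
  have hbd : Bornology.IsBounded (φ '' ball x (6 * η)) := by
    refine (((isCompact_closedBall x (6 * η)).image hcont).isBounded).subset ?_
    exact Set.image_mono ball_subset_closedBall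
  obtain ⟨K, hK⟩ := hb.exists_lipschitzOnWith_of_isBounded (by linarith : 5 * η < 6 * η) hbd
  -- a.e. differentiability on the ball of radius 5η
  have aediff : ∀ᵐ u ∂(volume : Measure (EuclideanSpace ℝ (Fin d))),
      u ∈ ball x (5 * η) → DifferentiableAt ℝ φ u := by
    filter_upwards [hK.ae_differentiableWithinAt_of_mem (μ := volume)] with u hu hmem
    exact (hu hmem).differentiableAt (isOpen_ball.mem_nhds hmem)
  -- measurability of the gradient
  have hmeas : Measurable (gradient φ) := by
    have : gradient φ = fun u =>
        (InnerProductSpace.toDual ℝ (EuclideanSpace ℝ (Fin d))).symm (fderiv ℝ φ u) := rfl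
    rw [this]
    exact ((InnerProductSpace.toDual ℝ _).symm.continuous.measurable).comp (measurable_fderiv ℝ φ)
  -- bound on the gradient norm on the ball of radius 5η
  have hgradbd : ∀ u ∈ ball x (5 * η), ‖gradient φ u‖ ≤ K := by
    intro u hu
    have h1 : ‖gradient φ u‖ = ‖fderiv ℝ φ u‖ := by
      have : gradient φ u =
          (InnerProductSpace.toDual ℝ (EuclideanSpace ℝ (Fin d))).symm (fderiv ℝ φ u) := rfl
      rw [this, LinearIsometryEquiv.norm_map]
    rw [h1]
    exact norm_fderiv_le_of_lipschitzOn ℝ (isOpen_ball.mem_nhds hu) hK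
  -- integrability of the gradient norm on closedBall x (4η)
  have hsub45 : closedBall x (4 * η) ⊆ ball x (5 * η) :=
    closedBall_subset_ball (by linarith)
  have hinteg : IntegrableOn (fun u => ‖gradient φ u‖) (closedBall x (4 * η)) volume := by
    refine Measure.integrableOn_of_bounded (M := (K : ℝ)) (measure_closedBall_lt_top).ne
      (hmeas.norm.aestronglyMeasurable) ?_
    refine (ae_restrict_iff' measurableSet_closedBall).mpr (Filter.Eventually.of_forall ?_)
    intro u hu
    rw [Real.norm_eq_abs, abs_of_nonneg (norm_nonneg _)]
    exact hgradbd u (hsub45 hu)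
  have hInonneg : (0:ℝ) ≤ ∫ u in closedBall x (4 * η), ‖gradient φ u‖ :=
    integral_nonneg fun u => norm_nonneg _
  rcases eq_or_ne g 0 with rfl | hg0
  · simpa using by positivity
  -- the shifted ball
  set e : EuclideanSpace ℝ (Fin d) := ‖g‖⁻¹ • g with he
  have hgn : (0:ℝ) < ‖g‖ := norm_pos_iff.mpr hg0
  have hne : ‖e‖ = 1 := by
    rw [he, norm_smul, norm_inv, norm_norm, inv_mul_cancel₀ hgn.ne']
  set c : EuclideanSpace ℝ (Fin d) := x + (3 * η) • e with hc
  have hcx : ‖c - x‖ = 3 * η := by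
    rw [hc, add_sub_cancel_left, norm_smul, hne, Real.norm_eq_abs,
      abs_of_nonneg (by linarith), mul_one]
  have hsubc : closedBall c η ⊆ closedBall x (4 * η) := by
    intro u hu
    rw [mem_closedBall, dist_eq_norm] at *
    calc ‖u - x‖ = ‖(u - c) + (c - x)‖ := by abel_nf
      _ ≤ ‖u - c‖ + ‖c - x‖ := norm_add_le _ _
      _ ≤ η + 3 * η := add_le_add hu (le_of_eq hcx)
      _ = 4 * η := by ring
  -- a.e. pointwise inequality on closedBall c η
  have key : ∀ᵐ u ∂(volume.restrict (closedBall c η)), ‖g‖ ≤ 5 * ‖gradient φ u‖ := by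
    filter_upwards [ae_restrict_mem measurableSet_closedBall, ae_restrict_of_ae aediff]
      with u hu hdiff
    have hu5 : u ∈ ball x (5 * η) := hsub45 (hsubc hu)
    have hd := hdiff hu5
    -- subgradient inequalities
    have h1 : (inner ℝ g (u - y) : ℝ) ≤ inner ℝ (gradient φ u) (u - y) := by
      have hA := hg u
      have hB := gradient_mem_subdiff_aux hφ hd y
      have hyu : y - u = -(u - y) := by abel
      rw [hyu, inner_neg_right] at hB
      linarith
    have h2 : (inner ℝ (gradient φ u) (u - y) : ℝ) ≤ ‖gradient φ u‖ * ‖u - y‖ :=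
      real_inner_le_norm _ _
    have h3 : ‖u - y‖ ≤ 5 * η := by
      have h31 : ‖u - c‖ ≤ η := by rwa [mem_closedBall, dist_eq_norm] at hu
      have h32 : ‖x - y‖ ≤ η := by
        rw [mem_closedBall, dist_eq_norm] at hy
        rw [← norm_neg]; simpa using hy
      calc ‖u - y‖ = ‖(u - c) + (c - x) + (x - y)‖ := by abel_nf
        _ ≤ ‖(u - c) + (c - x)‖ + ‖x - y‖ := norm_add_le _ _
        _ ≤ ‖u - c‖ + ‖c - x‖ + ‖x - y‖ := by
            have := norm_add_le (u - c) (c - x); linarith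
        _ ≤ η + 3 * η + η := by rw [hcx]; gcongr
        _ = 5 * η := by ring
    have h4 : η * ‖g‖ ≤ (inner ℝ g (u - y) : ℝ) := by
      have hdecomp : u - y = (u - c) + (c - x) + (x - y) := by abel
      rw [hdecomp, inner_add_right, inner_add_right]
      have hgc : (inner ℝ g (c - x) : ℝ) = 3 * η * ‖g‖ := by
        rw [hc, add_sub_cancel_left, he, smul_smul, real_inner_smul_right,
          real_inner_self_eq_norm_mul_norm]
        field_simp
      have huc : ‖u - c‖ ≤ η := by rwa [mem_closedBall, dist_eq_norm] at hu
      have hxy : ‖x - y‖ ≤ η := by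
        rw [mem_closedBall, dist_eq_norm] at hy
        rw [← norm_neg]; simpa using hy
      have hb1 : -(‖g‖ * η) ≤ (inner ℝ g (u - c) : ℝ) := by
        have habs := abs_real_inner_le_norm g (u - c)
        have := neg_abs_le (inner ℝ g (u - c) : ℝ)
        nlinarith [norm_nonneg (u - c)]
      have hb2 : -(‖g‖ * η) ≤ (inner ℝ g (x - y) : ℝ) := by
        have habs := abs_real_inner_le_norm g (x - y)
        have := neg_abs_le (inner ℝ g (x - y) : ℝ)
        nlinarith [norm_nonneg (x - y)]
      rw [hgc]
      linarith
    -- combine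
    have h5 : η * ‖g‖ ≤ ‖gradient φ u‖ * (5 * η) := by
      calc η * ‖g‖ ≤ (inner ℝ g (u - y) : ℝ) := h4
        _ ≤ (inner ℝ (gradient φ u) (u - y) : ℝ) := h1
        _ ≤ ‖gradient φ u‖ * ‖u - y‖ := h2
        _ ≤ ‖gradient φ u‖ * (5 * η) := by
            have := norm_nonneg (gradient φ u); nlinarith
    nlinarith
  -- integrate the inequality
  have hintegc : IntegrableOn (fun u => ‖gradient φ u‖) (closedBall c η) volume :=
    hinteg.mono_set hsubc
  haveI : IsFiniteMeasure (volume.restrict (closedBall c η)) :=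
    ⟨by rw [Measure.restrict_apply_univ]; exact measure_closedBall_lt_top⟩
  have hmono : ∫ _ in closedBall c η, ‖g‖ ≤ ∫ u in closedBall c η, 5 * ‖gradient φ u‖ := by
    refine integral_mono_ae (integrable_const _) (hintegc.const_mul 5) key
  have hLHS : ∫ _ in closedBall c η, ‖g‖ = (volume (closedBall c η)).toReal * ‖g‖ := by
    rw [setIntegral_const, smul_eq_mul, Measure.real]
  have hvol : volume (closedBall c η) = volume (closedBall x η) := by
    rw [Measure.addHaar_closedBall _ _ hη.le, Measure.addHaar_closedBall _ _ hη.le]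
  have hRHS : ∫ u in closedBall c η, 5 * ‖gradient φ u‖ ≤
      5 * ∫ u in closedBall x (4 * η), ‖gradient φ u‖ := by
    rw [integral_const_mul]
    have : ∫ u in closedBall c η, ‖gradient φ u‖ ≤
        ∫ u in closedBall x (4 * η), ‖gradient φ u‖ := by
      refine setIntegral_mono_set hinteg ?_ (HasSubset.Subset.eventuallyLE hsubc)
      exact Filter.Eventually.of_forall fun u => norm_nonneg _
    linarith
  calc ‖g‖ * (volume (closedBall x η)).toReal
      = (volume (closedBall c η)).toReal * ‖g‖ := by rw [hvol]; ring
    _ = ∫ _ in closedBall c η, ‖g‖ := hLHS.symm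
    _ ≤ ∫ u in closedBall c η, 5 * ‖gradient φ u‖ := hmono
    _ ≤ 5 * ∫ u in closedBall x (4 * η), ‖gradient φ u‖ := hRHS

set_option maxHeartbeats 1000000 in
/-- for a convex `φ : ℝ^d → ℝ`, every `x` and `η > 0`,
`diam(∂φ(B(x,η))) ≤ (12/(β_d η^d)) ∫_{B(x,4η)} ‖∇φ(u)‖ du`, where `β_d` is the volume
of the unit ball. -/
theorem diam_subdiff_le_integral_gradient (d : ℕ) (φ : EuclideanSpace ℝ (Fin d) → ℝ)
    (hφ : ConvexOn ℝ Set.univ φ) (x : EuclideanSpace ℝ (Fin d)) (η : ℝ) (hη : 0 < η) :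
    Metric.diam (subdiffSet φ (closedBall x η)) ≤
      12 / ((volume (ball (0 : EuclideanSpace ℝ (Fin d)) 1)).toReal * η ^ d) *
        ∫ u in closedBall x (4 * η), ‖gradient φ u‖ := by
  set β : ℝ := (volume (ball (0 : EuclideanSpace ℝ (Fin d)) 1)).toReal with hβ
  set I : ℝ := ∫ u in closedBall x (4 * η), ‖gradient φ u‖ with hI
  set V : ℝ := (volume (closedBall x η)).toReal with hV
  have hβpos : 0 < β := by
    rw [hβ]
    refine ENNReal.toReal_pos (measure_ball_pos _ _ one_pos).ne' measure_ball_lt_top.ne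
  have hVeq : V = β * η ^ d := by
    rw [hV, hβ, Measure.addHaar_closedBall _ _ hη.le, ENNReal.toReal_mul,
      ENNReal.toReal_ofReal (by positivity), finrank_euclideanSpace_fin]
    ring
  have hVpos : 0 < V := by rw [hVeq]; positivity
  have hInonneg : (0:ℝ) ≤ I := integral_nonneg fun u => norm_nonneg _
  have hrw : 12 / (β * η ^ d) * I = 12 / V * I := by rw [hVeq]
  rw [hrw]
  refine Metric.diam_le_of_forall_dist_le (by positivity) ?_
  intro g1 hg1 g2 hg2
  rw [subdiffSet, Set.mem_iUnion₂] at hg1 hg2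
  obtain ⟨y1, hy1, hgy1⟩ := hg1
  obtain ⟨y2, hy2, hgy2⟩ := hg2
  have h1 : ‖g1‖ * V ≤ 5 * I := norm_subgrad_le_aux hφ hη hy1 hgy1
  have h2 : ‖g2‖ * V ≤ 5 * I := norm_subgrad_le_aux hφ hη hy2 hgy2
  have hd12 : dist g1 g2 ≤ ‖g1‖ + ‖g2‖ := by
    rw [dist_eq_norm]
    exact norm_sub_le _ _
  have hsum : (‖g1‖ + ‖g2‖) * V ≤ 10 * I := by linarith
  have : ‖g1‖ + ‖g2‖ ≤ 10 * I / V := by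
    rw [le_div_iff₀ hVpos]; linarith
  calc dist g1 g2 ≤ ‖g1‖ + ‖g2‖ := hd12
    _ ≤ 10 * I / V := this
    _ ≤ 12 / V * I := by
        rw [div_mul_eq_mul_div]
        gcongr
        nlinarith
end

section
/- Let φ : ℝ^d → ℝ be a convex function (hence locally Lipschitz and differentiable Lebesgue-almost everywhere). Then for every x ∈ ℝ^d and η > 0, ∫_{B(x,4η)} ‖∇φ(u)‖ du ≥ (β_d η^{d−1}/6) · osc_{B(x,2η)}(φ), where β_d is the Lebesgue volume of the unit ball of ℝ^d, osc_K(f) = sup_{u,v ∈ K} |f(u) − f(v)|, and the integral of the a.e.-defined gradient is with respect to Lebesgue measure. -/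
open Metric Set MeasureTheory

/-- The oscillation `osc_K(f) = sup_{u,v ∈ K} |f(u) - f(v)|`. -/
noncomputable def osc {d : ℕ} (f : EuclideanSpace ℝ (Fin d) → ℝ)
    (K : Set (EuclideanSpace ℝ (Fin d))) : ℝ :=
  sSup ((fun q : EuclideanSpace ℝ (Fin d) × EuclideanSpace ℝ (Fin d) => |f q.1 - f q.2|) ''
    (K ×ˢ K))

section aux

variable {F : Type*} [NormedAddCommGroup F] [InnerProductSpace ℝ F] [CompleteSpace F]

lemma norm_gradient_eq_aux (f : F → ℝ) (x : F) : ‖gradient f x‖ = ‖fderiv ℝ f x‖ :=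
  (InnerProductSpace.toDual ℝ F).symm.norm_map _

/-- Subgradient inequality for a convex function at a differentiability point. -/
lemma subgrad_aux {φ : F → ℝ} (hφ : ConvexOn ℝ Set.univ φ) {w : F}
    (hw : DifferentiableAt ℝ φ w) (u : F) :
    φ w - φ u ≤ ‖gradient φ w‖ * ‖w - u‖ := by
  set g : ℝ → ℝ := fun t => φ (u + t • (w - u)) with hgdef
  have hgeq : g = φ ∘ (AffineMap.lineMap u w : ℝ →ᵃ[ℝ] F) := by
    funext t
    simp only [hgdef, Function.comp_apply, AffineMap.lineMap_apply_module]
    congr 1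
    module
  have hgconv : ConvexOn ℝ Set.univ g := by
    rw [hgeq]
    have := hφ.comp_affineMap (AffineMap.lineMap u w : ℝ →ᵃ[ℝ] F)
    simpa using this
  have hline : HasDerivAt (fun t : ℝ => u + t • (w - u)) (w - u) 1 := by
    simpa using ((hasDerivAt_id (1 : ℝ)).smul_const (w - u)).const_add u
  have hw' : HasFDerivAt φ (fderiv ℝ φ w) (u + (1 : ℝ) • (w - u)) := by
    simpa using hw.hasFDerivAt
  have hcomp : HasDerivAt g (fderiv ℝ φ w (w - u)) 1 := hw'.comp_hasDerivAt 1 hline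
  have hslope := hgconv.slope_le_deriv (mem_univ (0 : ℝ)) (mem_univ (1 : ℝ)) one_pos
    hcomp.differentiableAt
  rw [hcomp.deriv] at hslope
  have hg1 : g 1 = φ w := by simp [hgdef]
  have hg0 : g 0 = φ u := by simp [hgdef]
  have hslope' : φ w - φ u ≤ fderiv ℝ φ w (w - u) := by
    have : slope g 0 1 = φ w - φ u := by
      rw [slope_def_field, hg1, hg0]; ring
    linarith [this ▸ hslope]
  calc φ w - φ u ≤ fderiv ℝ φ w (w - u) := hslope'
    _ ≤ ‖fderiv ℝ φ w (w - u)‖ := le_abs_self _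
    _ ≤ ‖fderiv ℝ φ w‖ * ‖w - u‖ := ContinuousLinearMap.le_opNorm _ _
    _ = ‖gradient φ w‖ * ‖w - u‖ := by rw [norm_gradient_eq_aux]

end aux

/-- for a convex `φ : ℝ^d → ℝ`, every `x` and `η > 0`,
`∫_{B(x,4η)} ‖∇φ(u)‖ du ≥ (β_d η^(d-1)/6) osc_{B(x,2η)}(φ)`, where `β_d` is the volume
of the unit ball. -/
theorem integral_gradient_ge_osc (d : ℕ) (φ : EuclideanSpace ℝ (Fin d) → ℝ)
    (hφ : ConvexOn ℝ Set.univ φ) (x : EuclideanSpace ℝ (Fin d)) (η : ℝ) (hη : 0 < η) :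
    (volume (ball (0 : EuclideanSpace ℝ (Fin d)) 1)).toReal * η ^ (d - 1) / 6 *
        osc φ (closedBall x (2 * η)) ≤
      ∫ u in closedBall x (4 * η), ‖gradient φ u‖ := by
  have hcont : Continuous φ := hφ.locallyLipschitz.continuous
  have hKcompact : IsCompact (closedBall x (2 * η)) := isCompact_closedBall x _
  have hne : (closedBall x (2 * η)).Nonempty := ⟨x, mem_closedBall_self (by positivity)⟩
  obtain ⟨v, hv, hvmax⟩ := hKcompact.exists_isMaxOn hne hcont.continuousOn
  obtain ⟨u, hu, humin⟩ := hKcompact.exists_isMinOn hne hcont.continuousOn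
  rw [isMaxOn_iff] at hvmax
  rw [isMinOn_iff] at humin
  have hvu : φ u ≤ φ v := humin v hv
  have hosc : osc φ (closedBall x (2 * η)) = φ v - φ u := by
    unfold osc
    have hbd : ∀ z ∈ (fun q : EuclideanSpace ℝ (Fin d) × EuclideanSpace ℝ (Fin d) =>
        |φ q.1 - φ q.2|) '' (closedBall x (2 * η) ×ˢ closedBall x (2 * η)), z ≤ φ v - φ u := by
      rintro z ⟨⟨a, b⟩, hab, rfl⟩
      rw [Set.mem_prod] at hab
      rw [abs_sub_le_iff]
      constructor
      · linarith [hvmax a hab.1, humin b hab.2]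
      · linarith [hvmax b hab.2, humin a hab.1]
    apply le_antisymm
    · exact csSup_le ⟨_, ⟨(v, u), Set.mem_prod.2 ⟨hv, hu⟩, rfl⟩⟩ hbd
    · apply le_csSup ⟨φ v - φ u, hbd⟩
      exact ⟨(v, u), Set.mem_prod.2 ⟨hv, hu⟩, abs_of_nonneg (by linarith)⟩
  rw [hosc]
  -- Lipschitz constant on ball x (5η)
  obtain ⟨K, hK5⟩ : ∃ K : NNReal, LipschitzOnWith K φ (ball x (5 * η)) := by
    refine (hφ.subset (subset_univ _) (convex_ball x (6 * η))).exists_lipschitzOnWith_of_isBounded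
      (r' := 5 * η) (by linarith) ?_
    exact (((isCompact_closedBall x (6 * η)).image hcont).isBounded).subset
      (image_mono ball_subset_closedBall)
  -- boundedness and integrability of the gradient norm
  have hgmeas : Measurable fun w => ‖gradient φ w‖ := by
    apply Measurable.norm
    exact ((InnerProductSpace.toDual ℝ
      (EuclideanSpace ℝ (Fin d))).symm.continuous.measurable).comp (measurable_fderiv ℝ φ)
  have hgradbound : ∀ w ∈ closedBall x (4 * η), ‖gradient φ w‖ ≤ K := by
    intro w hw
    have hw5 : w ∈ ball x (5 * η) := by
      rw [mem_closedBall] at hw; rw [mem_ball]; linarith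
    rw [norm_gradient_eq_aux]
    exact norm_fderiv_le_of_lipschitzOn ℝ (isOpen_ball.mem_nhds hw5) hK5
  have hint : IntegrableOn (fun w => ‖gradient φ w‖) (closedBall x (4 * η)) volume := by
    apply Measure.integrableOn_of_bounded (M := (K : ℝ)) measure_closedBall_lt_top.ne
      hgmeas.aestronglyMeasurable
    exact ae_restrict_of_forall_mem measurableSet_closedBall fun w hw => by
      rw [Real.norm_eq_abs, abs_of_nonneg (norm_nonneg _)]; exact hgradbound w hw
  rcases Nat.eq_zero_or_pos d with hd | hd
  · subst hd
    have hvu' : v = u := Subsingleton.elim v u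
    rw [hvu', sub_self, mul_zero]
    exact setIntegral_nonneg measurableSet_closedBall fun w _ => norm_nonneg _
  · -- main case
    set c := v + (1 / 2 : ℝ) • (v - x) with hc
    have hvx : ‖v - x‖ ≤ 2 * η := by
      have := mem_closedBall_iff_norm.1 hv; linarith
    have hcx : ‖c - x‖ ≤ 3 * η := by
      have hceq : c - x = (3 / 2 : ℝ) • (v - x) := by rw [hc]; module
      rw [hceq, norm_smul]
      rw [Real.norm_eq_abs]
      rw [abs_of_nonneg (by norm_num : (0:ℝ) ≤ 3/2)]
      linarith
    have hsub : closedBall c η ⊆ closedBall x (4 * η) := by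
      intro w hw
      rw [mem_closedBall, dist_eq_norm] at *
      have htri : ‖w - x‖ ≤ ‖w - c‖ + ‖c - x‖ := by
        have := dist_triangle w c x
        simpa [dist_eq_norm] using this
      linarith
    -- a.e. lower bound on the small ball
    have hlow : ∀ᵐ w ∂(volume.restrict (closedBall c η)),
        (φ v - φ u) / (6 * η) ≤ ‖gradient φ w‖ := by
      have hae : ∀ᵐ w ∂(volume : Measure (EuclideanSpace ℝ (Fin d))),
          w ∈ ball x (5 * η) → DifferentiableWithinAt ℝ φ (ball x (5 * η)) w :=
        hK5.ae_differentiableWithinAt_of_mem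
      rw [ae_restrict_iff' measurableSet_closedBall]
      filter_upwards [hae] with w hwdiff hwmem
      have hw5 : w ∈ ball x (5 * η) := by
        have := hsub hwmem
        rw [mem_closedBall] at this; rw [mem_ball]; linarith
      have hdiff : DifferentiableAt ℝ φ w :=
        (hwdiff hw5).differentiableAt (isOpen_ball.mem_nhds hw5)
      set x' := x - (2 : ℝ) • (w - c) with hx'
      have hwc : ‖w - c‖ ≤ η := mem_closedBall_iff_norm.1 hwmem
      have hx'mem : x' ∈ closedBall x (2 * η) := by
        rw [mem_closedBall_iff_norm]
        have : x' - x = -((2 : ℝ) • (w - c)) := by rw [hx']; module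
        rw [this, norm_neg, norm_smul, Real.norm_eq_abs, abs_of_nonneg (by norm_num : (0:ℝ) ≤ 2)]
        linarith
      have hvcomb : v = (2 / 3 : ℝ) • w + (1 / 3 : ℝ) • x' := by
        rw [hx', hc]; module
      have hφw : φ v ≤ φ w := by
        have h2 := hφ.2 (mem_univ w) (mem_univ x') (by norm_num : (0:ℝ) ≤ 2/3)
          (by norm_num : (0:ℝ) ≤ 1/3) (by norm_num)
        rw [← hvcomb] at h2
        have h3 : φ x' ≤ φ v := hvmax x' hx'mem
        have h23 : (0:ℝ) < 2/3 := by norm_num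
        simp only [smul_eq_mul] at h2
        linarith
      have hsg := subgrad_aux hφ hdiff u
      have hwu : ‖w - u‖ ≤ 6 * η := by
        have hux : ‖u - x‖ ≤ 2 * η := mem_closedBall_iff_norm.1 hu
        have t1 : ‖w - u‖ ≤ ‖w - c‖ + ‖c - u‖ := by
          have := dist_triangle w c u
          simpa [dist_eq_norm] using this
        have t2 : ‖c - u‖ ≤ ‖c - x‖ + ‖x - u‖ := by
          have := dist_triangle c x u
          simpa [dist_eq_norm] using this
        have t3 : ‖x - u‖ = ‖u - x‖ := norm_sub_rev x u
        linarith
      rw [div_le_iff₀ (by positivity : (0:ℝ) < 6 * η)]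
      have hgnn : (0:ℝ) ≤ ‖gradient φ w‖ := norm_nonneg _
      calc φ v - φ u ≤ φ w - φ u := by linarith
        _ ≤ ‖gradient φ w‖ * ‖w - u‖ := hsg
        _ ≤ ‖gradient φ w‖ * (6 * η) := by nlinarith
    -- volume of the small ball
    have hvol : (volume (closedBall c η)).toReal =
        η ^ d * (volume (ball (0 : EuclideanSpace ℝ (Fin d)) 1)).toReal := by
      rw [Measure.addHaar_closedBall volume c hη.le, finrank_euclideanSpace_fin,
        ENNReal.toReal_mul, ENNReal.toReal_ofReal (pow_nonneg hη.le d)]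
    have hintc : IntegrableOn (fun w => ‖gradient φ w‖) (closedBall c η) volume :=
      hint.mono_set hsub
    have hconst : IntegrableOn (fun _ => (φ v - φ u) / (6 * η)) (closedBall c η) volume :=
      integrableOn_const measure_closedBall_lt_top.ne
    have hstep := setIntegral_mono_ae_restrict hconst hintc hlow
    rw [setIntegral_const, smul_eq_mul, measureReal_def, hvol] at hstep
    have hmono : (∫ w in closedBall c η, ‖gradient φ w‖) ≤
        ∫ w in closedBall x (4 * η), ‖gradient φ w‖ :=
      setIntegral_mono_set hint
        (ae_restrict_of_forall_mem measurableSet_closedBall fun w _ => norm_nonneg _)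
        (HasSubset.Subset.eventuallyLE hsub)
    have hpow : η ^ d = η ^ (d - 1) * η := by
      rw [← pow_succ, Nat.sub_add_cancel hd]
    have hLHS : (volume (ball (0 : EuclideanSpace ℝ (Fin d)) 1)).toReal * η ^ (d - 1) / 6 *
        (φ v - φ u) = η ^ d * (volume (ball (0 : EuclideanSpace ℝ (Fin d)) 1)).toReal *
        ((φ v - φ u) / (6 * η)) := by
      rw [hpow]; field_simp
    rw [hLHS]
    exact hstep.trans hmono
end

section
/- Let p ≥ 2 and R > 0. The function ξ_p(z) = ‖z‖^p is (−p(p−1)R^{p−2})-concave on B(0,R); equivalently, the function z ↦ (p(p−1)R^{p−2}/2)‖z‖² − ‖z‖^p is convex on the closed ball B(0,R). -/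
open Metric Set Real

/-- The 1-D profile `g t = C/2 t² − t^p` is convex on `[0,R]`. -/
lemma pCost_profile_convex (p R : ℝ) (hp : 2 ≤ p) (hR : 0 < R) :
    ConvexOn ℝ (Icc (0:ℝ) R)
      (fun t : ℝ => p * (p - 1) * R ^ (p - 2) / 2 * t ^ 2 - t ^ p) := by
  set C : ℝ := p * (p - 1) * R ^ (p - 2) with hC
  have hint : interior (Icc (0:ℝ) R) = Ioo 0 R := interior_Icc
  refine convexOn_of_hasDerivWithinAt2_nonneg (f' := fun x => C * x - p * x ^ (p - 1))
    (f'' := fun x => C - p * ((p - 1) * x ^ (p - 2))) (convex_Icc _ _) ?_ ?_ ?_ ?_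
  · apply ContinuousOn.sub
    · fun_prop
    · exact fun x hx => (Real.continuousAt_rpow_const x p (Or.inr (by linarith))).continuousWithinAt
  · intro x hx
    rw [hint] at hx
    have h1 : HasDerivAt (fun t : ℝ => C / 2 * t ^ 2) (C / 2 * (2 * x ^ 1)) x := by
      simpa using (hasDerivAt_pow 2 x).const_mul (C / 2)
    have h2 : HasDerivAt (fun t : ℝ => t ^ p) (p * x ^ (p - 1)) x :=
      Real.hasDerivAt_rpow_const (Or.inl hx.1.ne')
    rw [hint]
    have := (h1.sub h2).hasDerivWithinAt (s := Ioo (0:ℝ) R)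
    exact this.congr_deriv (by ring)
  · intro x hx
    rw [hint] at hx
    have h1 : HasDerivAt (fun t : ℝ => C * t) C x := by
      simpa using (hasDerivAt_id x).const_mul C
    have h2 : HasDerivAt (fun t : ℝ => t ^ (p - 1)) ((p - 1) * x ^ (p - 1 - 1)) x :=
      Real.hasDerivAt_rpow_const (Or.inl hx.1.ne')
    rw [show p - 1 - 1 = p - 2 by ring] at h2
    rw [hint]
    exact (h1.sub (h2.const_mul p)).hasDerivWithinAt (s := Ioo (0:ℝ) R)
  · intro x hx
    rw [hint] at hx
    have hxR : x ^ (p - 2) ≤ R ^ (p - 2) :=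
      Real.rpow_le_rpow hx.1.le hx.2.le (by linarith)
    have hp0 : 0 ≤ p * (p - 1) := by nlinarith
    simp only [hC]
    nlinarith [mul_le_mul_of_nonneg_left hxR hp0]

/-- The 1-D profile is monotone on `[0,R]`. -/
lemma pCost_profile_mono (p R : ℝ) (hp : 2 ≤ p) (hR : 0 < R) :
    MonotoneOn (fun t : ℝ => p * (p - 1) * R ^ (p - 2) / 2 * t ^ 2 - t ^ p)
      (Icc (0:ℝ) R) := by
  set C : ℝ := p * (p - 1) * R ^ (p - 2) with hC
  have hint : interior (Icc (0:ℝ) R) = Ioo 0 R := interior_Icc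
  have key : ∀ x ∈ interior (Icc (0:ℝ) R),
      HasDerivAt (fun t : ℝ => C / 2 * t ^ 2 - t ^ p) (C * x - p * x ^ (p - 1)) x := by
    intro x hx
    rw [hint] at hx
    have h1 : HasDerivAt (fun t : ℝ => C / 2 * t ^ 2) (C / 2 * (2 * x ^ 1)) x := by
      simpa using (hasDerivAt_pow 2 x).const_mul (C / 2)
    have h2 : HasDerivAt (fun t : ℝ => t ^ p) (p * x ^ (p - 1)) x :=
      Real.hasDerivAt_rpow_const (Or.inl hx.1.ne')
    exact (h1.sub h2).congr_deriv (by ring)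
  apply monotoneOn_of_deriv_nonneg (convex_Icc _ _)
  · apply ContinuousOn.sub
    · fun_prop
    · exact fun x hx => (Real.continuousAt_rpow_const x p (Or.inr (by linarith))).continuousWithinAt
  · exact fun x hx => ((key x hx).differentiableAt).differentiableWithinAt
  · intro x hx
    rw [(key x hx).deriv]
    rw [hint] at hx
    have hxR : x ^ (p - 2) ≤ R ^ (p - 2) :=
      Real.rpow_le_rpow hx.1.le hx.2.le (by linarith)
    have hsplit : x ^ (p - 1) = x ^ (p - 2) * x := by
      rw [show p - 1 = p - 2 + 1 by ring, Real.rpow_add hx.1, Real.rpow_one]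
    have hp0 : 0 ≤ p := by linarith
    rw [hsplit]
    have hx0 : 0 ≤ x := hx.1.le
    have h1 : p * (x ^ (p - 2) * x) ≤ p * (R ^ (p - 2) * x) := by
      apply mul_le_mul_of_nonneg_left _ hp0
      exact mul_le_mul_of_nonneg_right hxR hx0
    have h2 : p * (R ^ (p - 2) * x) ≤ C * x := by
      simp only [hC]
      have hRp : 0 ≤ R ^ (p - 2) := Real.rpow_nonneg hR.le _
      nlinarith [mul_nonneg (mul_nonneg (mul_nonneg hp0 hRp) hx0) (by linarith : (0:ℝ) ≤ p - 2)]
    linarith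

/-- the p-cost `ξ_p(z) = ‖z‖^p` is `(-p(p-1)R^(p-2))`-concave on `B(0,R)`,
i.e. `z ↦ (p(p-1)R^(p-2)/2)‖z‖² - ‖z‖^p` is convex on the closed ball `B(0,R)`. -/
theorem pCost_semiconcave (d : ℕ) (p R : ℝ) (hp : 2 ≤ p) (hR : 0 < R) :
    ConvexOn ℝ (closedBall (0 : EuclideanSpace ℝ (Fin d)) R)
      (fun z : EuclideanSpace ℝ (Fin d) =>
        p * (p - 1) * R ^ (p - 2) / 2 * ‖z‖ ^ 2 - ‖z‖ ^ p) := by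
  set g : ℝ → ℝ := fun t => p * (p - 1) * R ^ (p - 2) / 2 * t ^ 2 - t ^ p with hg
  have hconv := pCost_profile_convex p R hp hR
  have hmono := pCost_profile_mono p R hp hR
  refine ⟨convex_closedBall _ _, ?_⟩
  intro x hx y hy a b ha hb hab
  have hnx : ‖x‖ ∈ Icc (0:ℝ) R := ⟨norm_nonneg _, mem_closedBall_zero_iff.mp hx⟩
  have hny : ‖y‖ ∈ Icc (0:ℝ) R := ⟨norm_nonneg _, mem_closedBall_zero_iff.mp hy⟩
  have hcomb : a * ‖x‖ + b * ‖y‖ ∈ Icc (0:ℝ) R :=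
    (convex_Icc (0:ℝ) R) hnx hny ha hb hab
  have hn1 : ‖a • x + b • y‖ ≤ a * ‖x‖ + b * ‖y‖ := by
    calc ‖a • x + b • y‖ ≤ ‖a • x‖ + ‖b • y‖ := norm_add_le _ _
    _ = a * ‖x‖ + b * ‖y‖ := by
        rw [norm_smul, norm_smul, Real.norm_of_nonneg ha, Real.norm_of_nonneg hb]
  have hmem : ‖a • x + b • y‖ ∈ Icc (0:ℝ) R :=
    ⟨norm_nonneg _, le_trans hn1 hcomb.2⟩
  calc g ‖a • x + b • y‖ ≤ g (a * ‖x‖ + b * ‖y‖) := hmono hmem hcomb hn1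
  _ ≤ a * g ‖x‖ + b * g ‖y‖ := hconv.2 hnx hny ha hb hab
end
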